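/- arXiv:1809.06898 — 5 statements merged into one kernel-verified Lean document; each statement's English description precedes it below -/
import Mathlib

section
/- The Q_0-Margolis homology of B₂ is the polynomial algebra F_p[ζ_1, ζ_2]: the polynomial subalgebra F_p[ζ_1, ζ_2] ⊆ B₂ is contained in ker(Q_0), meets im(Q_0) only in 0, and the composite F_p[ζ_1, ζ_2] → ker(Q_0) → ker(Q_0)/im(Q_0) is an isomorphism of graded F_p-vector spaces. -/
/-- A monomial of `B n = F_p[ζ₁, ζ₂, …] ⊗ Λ(τ̄_{n+1}, τ̄_{n+2}, …)`:
`e k` is the exponent of `ζ_k` (with `e 0 = 0`, i.e. no `ζ₀`), and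
`t` is the set of indices `m` of the exterior generators `τ̄_m` occurring
(all of which satisfy `m ≥ n + 1`). -/
structure Mono (n : ℕ) where
  e : ℕ →₀ ℕ
  t : Finset ℕ
  he : e 0 = 0
  ht : ∀ m ∈ t, n + 1 ≤ m

/-- `B p n` models `A//E(n)_* = F_p[ζ₁, ζ₂, …] ⊗ Λ(τ̄_{n+1}, …)` as the free
`F_p`-vector space on its monomial basis. -/
abbrev B (p n : ℕ) : Type := Mono n →₀ ZMod p

namespace Mono

variable {n : ℕ}

/-- Internal (topological) degree of a monomial: `deg ζ_k = 2(p^k − 1)`,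
`deg τ̄_m = 2p^m − 1`. -/
def deg (p : ℕ) (x : Mono n) : ℕ :=
  x.e.sum (fun k a => a * (2 * (p ^ k - 1))) + ∑ m ∈ x.t, (2 * p ^ m - 1)

/-- Weight of a monomial: `wt ζ_k = wt τ̄_k = p^k`, extended additively. -/
def wt (p : ℕ) (x : Mono n) : ℕ :=
  x.e.sum (fun k a => a * p ^ k) + ∑ m ∈ x.t, p ^ m

/-- Length of a monomial: the number of exterior factors `τ̄_m` occurring in it. -/
def len (x : Mono n) : ℕ := x.t.card

end Mono

/-- The monomial obtained from `x` by the Milnor operation `Q_r` acting on the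
exterior factor `τ̄_m`: remove `τ̄_m` and multiply by `ζ_{m−r}^{p^r}`
(with the convention `ζ₀ = 1`, i.e. if `m ≤ r` nothing is added). -/
noncomputable def Qtarget (p r : ℕ) {n : ℕ} (x : Mono n) (m : ℕ) : Mono n where
  e := if r < m then x.e + Finsupp.single (m - r) (p ^ r) else x.e
  t := x.t.erase m
  he := by
    by_cases h : r < m
    · simp [if_pos h, Finsupp.single_apply, x.he, Nat.sub_ne_zero_of_lt h]
    · simp [if_neg h, x.he]
  ht := fun m' hm' => x.ht m' (Finset.mem_of_mem_erase hm')

/-- Value of the Milnor operation `Q_r` on a basis monomial: the signed sum over the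
exterior factors `τ̄_m` of `x`, the sign being the Koszul sign `(−1)^{#{m' ∈ t, m' < m}}`. -/
noncomputable def Qmono (p r : ℕ) {n : ℕ} (x : Mono n) : B p n :=
  ∑ m ∈ x.t, ((-1 : ZMod p) ^ ((x.t.filter (fun m' => m' < m)).card)) •
    Finsupp.single (Qtarget p r x m) (1 : ZMod p)

/-- The Milnor operation `Q_r : B_n → B_n`, the unique graded derivation with
`Q_r ζ_k = 0` and `Q_r τ̄_m = ζ_{m−r}^{p^r}`. -/
noncomputable def Qop (p n r : ℕ) : B p n →ₗ[ZMod p] B p n :=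
  Finsupp.lsum (ZMod p) fun x => LinearMap.toSpanSingleton (ZMod p) (B p n) (Qmono p r x)

/-- The span of the set of monomials satisfying a predicate `P`. -/
noncomputable def monSpan (p n : ℕ) (P : Mono n → Prop) : Submodule (ZMod p) (B p n) :=
  Submodule.span (ZMod p) ((fun x => Finsupp.single x (1 : ZMod p)) '' {x | P x})

section Aux

lemma Mono.ext' {n : ℕ} {x y : Mono n} (he : x.e = y.e) (ht : x.t = y.t) : x = y := by
  cases x; cases y; simp_all

/-- The predicate cutting out `F_p[ζ₁,ζ₂]`. -/
def P2 (x : Mono 2) : Prop := x.t = ∅ ∧ ∀ k, k ≠ 1 → k ≠ 2 → x.e k = 0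

/-- Indices ≥ 3 actually occurring in the monomial `x`. -/
def inv2 (x : Mono 2) : Finset ℕ := x.t ∪ (x.e.support \ {0, 1, 2})

lemma three_le_of_mem_inv2 {x : Mono 2} {a : ℕ} (ha : a ∈ inv2 x) : 3 ≤ a := by
  rcases Finset.mem_union.1 ha with h | h
  · exact x.ht a h
  · simp only [Finset.mem_sdiff, Finset.mem_insert, Finset.mem_singleton] at h
    omega

lemma inv2_empty_iff {x : Mono 2} : inv2 x = ∅ ↔ P2 x := by
  constructor
  · intro h
    rw [inv2, Finset.union_eq_empty] at h
    refine ⟨h.1, fun k h1 h2 => ?_⟩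
    by_cases h0 : k = 0
    · subst h0; exact x.he
    · by_contra hk
      have hmem : k ∈ x.e.support \ ({0, 1, 2} : Finset ℕ) := by
        simp [Finsupp.mem_support_iff, hk, h0, h1, h2]
      rw [h.2] at hmem
      simp at hmem
  · rintro ⟨h1, h2⟩
    rw [inv2, h1, Finset.empty_union, Finset.sdiff_eq_empty_iff_subset]
    intro a ha
    rw [Finsupp.mem_support_iff] at ha
    by_contra hno
    simp only [Finset.mem_insert, Finset.mem_singleton] at hno
    push_neg at hno
    exact ha (h2 a hno.2.1 hno.2.2)

lemma Qtarget_t {p r n : ℕ} (x : Mono n) (m : ℕ) : (Qtarget p r x m).t = x.t.erase m := rfl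

lemma Qtarget_e0 {p n : ℕ} (x : Mono n) {m : ℕ} (hm : 0 < m) :
    (Qtarget p 0 x m).e = x.e + Finsupp.single m 1 := by
  simp [Qtarget, if_pos hm]

end Aux

section Homotopy
open Finsupp

/-- The contracting homotopy on monomials: if `m` is the least index ≥ 3 occurring in `x`
and `m` is not an exterior index, replace one factor `ζ_m` by `τ̄_m`; otherwise `0`. -/
noncomputable def hmono (p : ℕ) (x : Mono 2) : B p 2 :=
  if h : (inv2 x).Nonempty then
    if (inv2 x).min' h ∈ x.t then 0
    else Finsupp.single
      { e := x.e - Finsupp.single ((inv2 x).min' h) 1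
        t := insert ((inv2 x).min' h) x.t
        he := by simp [Finsupp.tsub_apply, x.he]
        ht := by
          intro m hm
          rcases Finset.mem_insert.1 hm with rfl | hm
          · exact three_le_of_mem_inv2 ((inv2 x).min'_mem h)
          · exact x.ht m hm } 1
  else 0

noncomputable def hop (p : ℕ) : B p 2 →ₗ[ZMod p] B p 2 :=
  Finsupp.lsum (ZMod p) fun x => LinearMap.toSpanSingleton (ZMod p) (B p 2) (hmono p x)

open scoped Classical in
noncomputable def piop (p : ℕ) : B p 2 →ₗ[ZMod p] B p 2 :=
  Finsupp.lsum (ZMod p) fun x => LinearMap.toSpanSingleton (ZMod p) (B p 2)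
    (if P2 x then Finsupp.single x 1 else 0)

variable {p : ℕ}

lemma Qop_single {n r : ℕ} (x : Mono n) (c : ZMod p) :
    Qop p n r (Finsupp.single x c) = c • Qmono p r x := by
  simp [Qop, Finsupp.lsum_single, LinearMap.toSpanSingleton_apply]

lemma hop_single (x : Mono 2) (c : ZMod p) :
    hop p (Finsupp.single x c) = c • hmono p x := by
  simp [hop, Finsupp.lsum_single, LinearMap.toSpanSingleton_apply]

open scoped Classical in
lemma piop_single (x : Mono 2) (c : ZMod p) :
    piop p (Finsupp.single x c) = c • (if P2 x then Finsupp.single x 1 else 0) := by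
  simp [piop, Finsupp.lsum_single, LinearMap.toSpanSingleton_apply]

lemma hmono_eq_zero {x : Mono 2} {m : ℕ} (hmem : m ∈ inv2 x)
    (hmin : ∀ a ∈ inv2 x, m ≤ a) (hmt : m ∈ x.t) : hmono p x = 0 := by
  have h : (inv2 x).Nonempty := ⟨m, hmem⟩
  have hm : (inv2 x).min' h = m :=
    le_antisymm (Finset.min'_le _ _ hmem) (Finset.le_min' _ _ _ hmin)
  rw [hmono, dif_pos h]
  simp only [hm, if_pos hmt]

lemma hmono_eq_single {x z : Mono 2} {m : ℕ} (hmem : m ∈ inv2 x)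
    (hmin : ∀ a ∈ inv2 x, m ≤ a) (hmt : m ∉ x.t)
    (hze : z.e = x.e - Finsupp.single m 1) (hzt : z.t = insert m x.t) :
    hmono p x = Finsupp.single z 1 := by
  have h : (inv2 x).Nonempty := ⟨m, hmem⟩
  have hm : (inv2 x).min' h = m :=
    le_antisymm (Finset.min'_le _ _ hmem) (Finset.le_min' _ _ _ hmin)
  rw [hmono, dif_pos h]
  simp only [hm, if_neg hmt]
  congr 1
  exact (Mono.ext' hze hzt).symm

lemma hop_Qmono (x : Mono 2) :
    hop p (Qmono p 0 x) = ∑ m ∈ x.t,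
      ((-1 : ZMod p) ^ ((x.t.filter (fun m' => m' < m)).card)) •
        hmono p (Qtarget p 0 x m) := by
  rw [Qmono, map_sum]
  refine Finset.sum_congr rfl fun m _ => ?_
  rw [map_smul, hop_single, one_smul]

end Homotopy

section Key
open Finsupp
variable {p : ℕ}

lemma inv2_Qtarget_le {x : Mono 2} {m : ℕ} (hmin : ∀ a ∈ inv2 x, m ≤ a)
    {b : ℕ} (hb : b ∈ x.t) : ∀ a ∈ inv2 (Qtarget p 0 x b), m ≤ a := by
  intro a ha
  have hb3 : 3 ≤ b := x.ht b hb
  have he : (Qtarget p 0 x b).e = x.e + Finsupp.single b 1 := Qtarget_e0 x (by omega)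
  rw [inv2, Qtarget_t, he] at ha
  rcases Finset.mem_union.1 ha with h | h
  · exact hmin a (Finset.mem_union_left _ (Finset.mem_of_mem_erase h))
  · rcases Finset.mem_sdiff.1 h with ⟨hs, hn⟩
    rcases Finset.mem_union.1 (Finsupp.support_add hs) with h1 | h1
    · exact hmin a (Finset.mem_union_right _ (Finset.mem_sdiff.2 ⟨h1, hn⟩))
    · have : a = b := by
        have := Finsupp.support_single_subset h1
        simpa using this
      subst this
      exact hmin a (Finset.mem_union_left _ hb)

/-- The homotopy identity on basis monomials: `Q h + h Q + π = id`. -/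
lemma homotopy_single (p : ℕ) (x : Mono 2) :
    Qop p 2 0 (hmono p x) + hop p (Qmono p 0 x) + piop p (Finsupp.single x 1)
      = Finsupp.single x 1 := by
  classical
  by_cases h : (inv2 x).Nonempty
  · -- some index ≥ 3 occurs
    have hP : ¬ P2 x := by
      rw [← inv2_empty_iff]
      exact fun hc => by simp [hc] at h
    rw [piop_single, if_neg hP, smul_zero, add_zero]
    set m := (inv2 x).min' h with hmdef
    have hmem : m ∈ inv2 x := (inv2 x).min'_mem h
    have hmin : ∀ a ∈ inv2 x, m ≤ a := fun a ha => Finset.min'_le _ _ ha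
    have hm3 : 3 ≤ m := three_le_of_mem_inv2 hmem
    by_cases hmt : m ∈ x.t
    · -- Case B : the least occurring index is exterior
      rw [hmono_eq_zero hmem hmin hmt, map_zero, zero_add, hop_Qmono]
      rw [Finset.sum_eq_single_of_mem m hmt ?side]
      case side =>
        intro b hb hne
        have hmem' : m ∈ inv2 (Qtarget p 0 x b) := by
          rw [inv2, Qtarget_t]
          exact Finset.mem_union_left _ (Finset.mem_erase.2 ⟨Ne.symm hne, hmt⟩)
        rw [hmono_eq_zero hmem' (inv2_Qtarget_le hmin hb)
          (Finset.mem_erase.2 ⟨Ne.symm hne, hmt⟩), smul_zero]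
      have hfilter : x.t.filter (fun m' => m' < m) = ∅ := by
        rw [Finset.filter_eq_empty_iff]
        intro a ha
        exact not_lt.2 (hmin a (Finset.mem_union_left _ ha))
      rw [hfilter]
      simp only [Finset.card_empty, pow_zero, one_smul]
      -- hmono (Qtarget x m) = single x 1
      have hmem' : m ∈ inv2 (Qtarget p 0 x m) := by
        rw [inv2, Qtarget_e0 x (by omega)]
        refine Finset.mem_union_right _ (Finset.mem_sdiff.2 ⟨?_, ?_⟩)
        · rw [Finsupp.mem_support_iff]
          simp [Finsupp.single_apply]
        · simp only [Finset.mem_insert, Finset.mem_singleton]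
          omega
      rw [hmono_eq_single (z := x) hmem' (inv2_Qtarget_le hmin hmt)
        (by rw [Qtarget_t]; exact Finset.notMem_erase m x.t)
        (by rw [Qtarget_e0 x (by omega : 0 < m)]
            ext a
            simp only [Finsupp.tsub_apply, Finsupp.add_apply, Finsupp.single_apply]
            by_cases hc : m = a
            · subst hc; simp
            · simp [hc])
        (by rw [Qtarget_t]; exact (Finset.insert_erase hmt).symm)]
    · -- Case C : the least occurring index is polynomial
      have hms : x.e m ≠ 0 := by
        rcases Finset.mem_union.1 hmem with hc | hc
        · exact absurd hc hmt
        · exact Finsupp.mem_support_iff.1 (Finset.mem_sdiff.1 hc).1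
      -- the image monomial y of x under h
      set y : Mono 2 :=
        { e := x.e - Finsupp.single m 1
          t := insert m x.t
          he := by simp [Finsupp.tsub_apply, x.he]
          ht := by
            intro a hamem
            rcases Finset.mem_insert.1 hamem with rfl | ha
            · exact hm3
            · exact x.ht a ha } with hydef
      rw [hmono_eq_single hmem hmin hmt (rfl : y.e = _) (rfl : y.t = _)]
      rw [Qop_single, one_smul, Qmono]
      have hyt : y.t = insert m x.t := rfl
      rw [hyt, Finset.sum_insert hmt]
      -- the head term gives back x
      have hhead : Finsupp.single (Qtarget p 0 y m) (1 : ZMod p) = Finsupp.single x 1 := by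
        congr 1
        refine Mono.ext' ?_ ?_
        · rw [Qtarget_e0 y (by omega : 0 < m)]
          show (x.e - Finsupp.single m 1) + Finsupp.single m 1 = x.e
          ext a
          simp only [Finsupp.add_apply, Finsupp.tsub_apply, Finsupp.single_apply]
          by_cases hc : m = a
          · subst hc; simp; omega
          · simp [hc]
        · rw [Qtarget_t, hyt, Finset.erase_insert hmt]
      have hheadsign : ((insert m x.t).filter (fun m' => m' < m)).card = 0 := by
        rw [Finset.card_eq_zero, Finset.filter_eq_empty_iff]
        intro a ha
        rcases Finset.mem_insert.1 ha with rfl | ha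
        · omega
        · exact not_lt.2 (hmin a (Finset.mem_union_left _ ha))
      rw [hheadsign, pow_zero, one_smul, hhead, hop_Qmono]
      rw [add_assoc, ← Finset.sum_add_distrib]
      rw [Finset.sum_eq_zero, add_zero]
      intro b hb
      have hbm : m < b := by
        have h1 : m ≤ b := hmin b (Finset.mem_union_left _ hb)
        have h2 : m ≠ b := fun hc => hmt (hc ▸ hb)
        omega
      have hb3 : 3 ≤ b := x.ht b hb
      -- hmono (Qtarget x b) = single (Qtarget y b) 1
      have hmem' : m ∈ inv2 (Qtarget p 0 x b) := by
        rw [inv2, Qtarget_e0 x (by omega : 0 < b)]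
        refine Finset.mem_union_right _ (Finset.mem_sdiff.2 ⟨?_, ?_⟩)
        · rw [Finsupp.mem_support_iff, Finsupp.add_apply, Finsupp.single_apply,
            if_neg (by omega : ¬ b = m)]
          omega
        · simp only [Finset.mem_insert, Finset.mem_singleton]
          omega
      have hrew : hmono p (Qtarget p 0 x b) = Finsupp.single (Qtarget p 0 y b) (1 : ZMod p) := by
        refine hmono_eq_single hmem' (inv2_Qtarget_le hmin hb) ?_ ?_ ?_
        · rw [Qtarget_t]
          exact fun hc => hmt (Finset.mem_of_mem_erase hc)
        · rw [Qtarget_e0 y (by omega : 0 < b), Qtarget_e0 x (by omega : 0 < b)]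
          show (x.e - Finsupp.single m 1) + Finsupp.single b 1
            = (x.e + Finsupp.single b 1) - Finsupp.single m 1
          ext a
          simp only [Finsupp.add_apply, Finsupp.tsub_apply, Finsupp.single_apply]
          by_cases hc1 : m = a
          · subst hc1
            rw [if_neg (by omega : ¬ b = m)]
            omega
          · by_cases hc2 : b = a <;> simp [hc1, hc2]
        · rw [Qtarget_t, Qtarget_t, hyt, Finset.erase_insert_of_ne (by omega : m ≠ b)]
      rw [hrew]
      -- signs cancel
      have hsign : ((insert m x.t).filter (fun m' => m' < b)).card
          = (x.t.filter (fun m' => m' < b)).card + 1 := by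
        rw [Finset.filter_insert, if_pos hbm, Finset.card_insert_of_notMem
          (fun hc => hmt (Finset.mem_of_mem_filter m hc))]
      rw [hsign, pow_succ, mul_neg_one, neg_smul, neg_add_cancel]
  · -- no index ≥ 3 occurs : x ∈ F_p[ζ₁,ζ₂]
    have hP : P2 x := inv2_empty_iff.1 (Finset.not_nonempty_iff_eq_empty.1 h)
    rw [hmono, dif_neg h, map_zero, zero_add, Qmono, hP.1, Finset.sum_empty, map_zero,
      zero_add, piop_single, if_pos hP, one_smul]

end Key

section Global
variable {p : ℕ}

lemma homotopy_global (p : ℕ) (v : B p 2) :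
    Qop p 2 0 (hop p v) + hop p (Qop p 2 0 v) + piop p v = v := by
  have : (Qop p 2 0 ∘ₗ hop p) + (hop p ∘ₗ Qop p 2 0) + piop p = LinearMap.id := by
    apply Finsupp.lhom_ext
    intro a b
    have hb : (Finsupp.single a b : B p 2) = b • Finsupp.single a 1 := by
      rw [Finsupp.smul_single, smul_eq_mul, mul_one]
    simp only [LinearMap.add_apply, LinearMap.comp_apply, LinearMap.id_apply]
    rw [hb, map_smul, map_smul, map_smul, map_smul, map_smul, ← smul_add, ← smul_add]
    rw [hop_single, one_smul, Qop_single, one_smul]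
    rw [homotopy_single]
  calc Qop p 2 0 (hop p v) + hop p (Qop p 2 0 v) + piop p v
      = ((Qop p 2 0 ∘ₗ hop p) + (hop p ∘ₗ Qop p 2 0) + piop p) v := rfl
    _ = v := by rw [this]; rfl

lemma piop_Qop (p : ℕ) (v : B p 2) : piop p (Qop p 2 0 v) = 0 := by
  classical
  have : piop p ∘ₗ Qop p 2 0 = 0 := by
    apply Finsupp.lhom_ext
    intro a b
    simp only [LinearMap.comp_apply, LinearMap.zero_apply]
    rw [Qop_single, map_smul, Qmono, map_sum]
    rw [Finset.sum_eq_zero, smul_zero]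
    intro m hm
    have hm3 : 3 ≤ m := a.ht m hm
    rw [map_smul, piop_single, if_neg, smul_zero, smul_zero]
    rintro ⟨-, h2⟩
    have := h2 m (by omega) (by omega)
    rw [Qtarget_e0 a (by omega : 0 < m), Finsupp.add_apply, Finsupp.single_apply,
      if_pos rfl] at this
    omega
  exact DFunLike.congr_fun this v

lemma piop_mem_span (p : ℕ) (v : B p 2) : piop p v ∈ monSpan p 2 P2 := by
  classical
  induction v using Finsupp.induction_linear with
  | zero => rw [map_zero]; exact Submodule.zero_mem _
  | add f g hf hg => rw [map_add]; exact Submodule.add_mem _ hf hg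
  | single a c =>
    rw [piop_single]
    by_cases hP : P2 a
    · rw [if_pos hP]
      exact Submodule.smul_mem _ _ (Submodule.subset_span ⟨a, hP, rfl⟩)
    · rw [if_neg hP, smul_zero]
      exact Submodule.zero_mem _

lemma piop_fix (p : ℕ) {v : B p 2} (hv : v ∈ monSpan p 2 P2) : piop p v = v := by
  classical
  have hker : monSpan p 2 P2 ≤ LinearMap.ker (piop p - LinearMap.id) := by
    rw [monSpan, Submodule.span_le]
    rintro - ⟨a, ha, rfl⟩
    rw [SetLike.mem_coe, LinearMap.mem_ker, LinearMap.sub_apply, LinearMap.id_apply,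
      piop_single, if_pos (show P2 a from ha), one_smul]
    exact sub_self _
  have := hker hv
  rw [LinearMap.mem_ker, LinearMap.sub_apply, LinearMap.id_apply, sub_eq_zero] at this
  exact this

end Global


/-- The `Q₀`-Margolis homology of `B₂` is `F_p[ζ₁, ζ₂]`:
the subspace spanned by the monomials `ζ₁^a ζ₂^b` is contained in `ker Q₀`,
meets `im Q₀` only in `0`, and the composite `F_p[ζ₁,ζ₂] → ker Q₀ → ker Q₀ / im Q₀`
is an isomorphism (of graded `F_p`-vector spaces). -/
theorem margolis_Q0_of_B2 (p : ℕ) (hp : p.Prime) (hodd : Odd p) :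
    monSpan p 2 (fun x => x.t = ∅ ∧ ∀ k, k ≠ 1 → k ≠ 2 → x.e k = 0) ≤
        LinearMap.ker (Qop p 2 0) ∧
    monSpan p 2 (fun x => x.t = ∅ ∧ ∀ k, k ≠ 1 → k ≠ 2 → x.e k = 0) ⊓
        LinearMap.range (Qop p 2 0) = ⊥ ∧
    LinearMap.ker (Qop p 2 0) ≤
      monSpan p 2 (fun x => x.t = ∅ ∧ ∀ k, k ≠ 1 → k ≠ 2 → x.e k = 0) ⊔
        LinearMap.range (Qop p 2 0) := by
  have hspan : monSpan p 2 (fun x => x.t = ∅ ∧ ∀ k, k ≠ 1 → k ≠ 2 → x.e k = 0)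
      = monSpan p 2 P2 := rfl
  refine ⟨?_, ?_, ?_⟩
  · rw [hspan, monSpan, Submodule.span_le]
    rintro - ⟨a, ha, rfl⟩
    rw [SetLike.mem_coe, LinearMap.mem_ker, Qop_single, Qmono, ha.1]
    simp
  · rw [hspan, eq_bot_iff]
    rintro v ⟨hv1, hv2⟩
    rcases hv2 with ⟨w, rfl⟩
    rw [Submodule.mem_bot]
    rw [← piop_fix p hv1, piop_Qop]
  · intro v hv
    rw [LinearMap.mem_ker] at hv
    have h := homotopy_global p v
    rw [hv, map_zero, add_zero] at h
    rw [hspan, ← h]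
    exact Submodule.add_mem _
      (Submodule.mem_sup_right ⟨hop p v, rfl⟩)
      (Submodule.mem_sup_left (piop_mem_span p v))
end

section
/- The Q_1-Margolis homology of B₂ is F_p[ζ_1] ⊗ T_1(ζ_2, ζ_3, …): the subspace of B₂ spanned by monomials ζ_1^{e_1} ζ_2^{e_2} ⋯ ζ_r^{e_r} in which e_k < p for every k ≥ 2 (with e_1 arbitrary) lies in ker(Q_1), meets im(Q_1) only in 0, and maps isomorphically onto ker(Q_1)/im(Q_1). -/
/- ############ auxiliary development ############ -/

namespace MargolisAux

theorem Mono.ext' {n : ℕ} {x y : Mono n} (he : x.e = y.e) (ht : x.t = y.t) : x = y := by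
  cases x; cases y; simp_all

/-- A monomial is "good" if it has no exterior factors and all `ζ_k`-exponents
(`k ≥ 2`) are `< p`. -/
def Gd (p : ℕ) (x : Mono 2) : Prop := x.t = ∅ ∧ ∀ k, 2 ≤ k → x.e k < p

/-- `x` is "bad at k". -/
def Bad (p k : ℕ) (x : Mono 2) : Prop := 2 ≤ k ∧ (p ≤ x.e k ∨ k + 1 ∈ x.t)

theorem exists_bad_iff {p : ℕ} {x : Mono 2} : (∃ k, Bad p k x) ↔ ¬ Gd p x := by
  constructor
  · rintro ⟨k, hk2, hk⟩ ⟨ht, he⟩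
    rcases hk with h | h
    · exact absurd (he k hk2) (not_lt.2 h)
    · rw [ht] at h; exact absurd h (Finset.notMem_empty _)
  · intro hg
    by_cases ht : x.t = ∅
    · have : ∃ k, 2 ≤ k ∧ p ≤ x.e k := by
        by_contra hc
        push_neg at hc
        exact hg ⟨ht, fun k hk => lt_of_not_ge fun h => absurd h (not_le.2 (hc k hk))⟩
      obtain ⟨k, hk2, hk⟩ := this
      exact ⟨k, hk2, Or.inl hk⟩
    · obtain ⟨m, hm⟩ := Finset.nonempty_iff_ne_empty.2 ht
      have h3 : 3 ≤ m := x.ht m hm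
      refine ⟨m - 1, by omega, Or.inr ?_⟩
      have : m - 1 + 1 = m := by omega
      rw [this]; exact hm


open scoped Classical

variable (p : ℕ)

/-- Remove `ζ_k^p` and add `τ̄_{k+1}`. -/
noncomputable def shiftE (x : Mono 2) (k : ℕ) (hk : 2 ≤ k) : Mono 2 where
  e := x.e - Finsupp.single k p
  t := insert (k + 1) x.t
  he := by
    rw [Finsupp.tsub_apply, x.he]
    simp
  ht := by
    intro m hm
    rcases Finset.mem_insert.1 hm with h | h
    · omega
    · exact x.ht m h

noncomputable def Hmono (x : Mono 2) : B p 2 :=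
  if h : ∃ k, Bad p k x then
    if (Nat.find h) + 1 ∈ x.t then 0
    else ((-1 : ZMod p) ^ ((x.t.filter (fun m' => m' < Nat.find h + 1)).card)) •
      Finsupp.single (shiftE p x (Nat.find h) (Nat.find_spec h).1) (1 : ZMod p)
  else 0

noncomputable def Pmono (x : Mono 2) : B p 2 :=
  if Gd p x then Finsupp.single x (1 : ZMod p) else 0

noncomputable def Hop : B p 2 →ₗ[ZMod p] B p 2 :=
  Finsupp.lsum (ZMod p) fun x => LinearMap.toSpanSingleton (ZMod p) (B p 2) (Hmono p x)

noncomputable def Pop : B p 2 →ₗ[ZMod p] B p 2 :=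
  Finsupp.lsum (ZMod p) fun x => LinearMap.toSpanSingleton (ZMod p) (B p 2) (Pmono p x)

theorem Qop_single (x : Mono 2) : Qop p 2 1 (Finsupp.single x 1) = Qmono p 1 x := by
  simp [Qop]

theorem Hop_single (x : Mono 2) : Hop p (Finsupp.single x 1) = Hmono p x := by
  simp [Hop]

theorem Pop_single (x : Mono 2) : Pop p (Finsupp.single x 1) = Pmono p x := by
  simp [Pop]

/-- e-component of `Qtarget p 1 x m` for `m ∈ x.t`. -/
theorem Qtarget_e {x : Mono 2} {m : ℕ} (hm : m ∈ x.t) :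
    (Qtarget p 1 x m).e = x.e + Finsupp.single (m - 1) p := by
  have h3 : 3 ≤ m := x.ht m hm
  simp [Qtarget, if_pos (show 1 < m by omega)]

theorem Qtarget_t (x : Mono 2) (m : ℕ) : (Qtarget p 1 x m).t = x.t.erase m := rfl

/-- Any `m ∈ x.t` gives badness at `m - 1`. -/
theorem bad_of_mem_t {x : Mono 2} {m : ℕ} (hm : m ∈ x.t) : Bad p (m - 1) x := by
  have h3 : 3 ≤ m := x.ht m hm
  refine ⟨by omega, Or.inr ?_⟩
  have : m - 1 + 1 = m := by omega
  rw [this]; exact hm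

theorem Hmono_eval {x : Mono 2} {k : ℕ} (hb : Bad p k x) (hmin : ∀ j, j < k → ¬ Bad p j x) :
    Hmono p x = if k + 1 ∈ x.t then 0
      else ((-1 : ZMod p) ^ ((x.t.filter (fun m' => m' < k + 1)).card)) •
        Finsupp.single (shiftE p x k hb.1) (1 : ZMod p) := by
  have h : ∃ k, Bad p k x := ⟨k, hb⟩
  have hf : Nat.find h = k := (Nat.find_eq_iff h).2 ⟨hb, hmin⟩
  rw [Hmono, dif_pos h]
  subst hf
  rfl

theorem Hmono_of_good {x : Mono 2} (hg : Gd p x) : Hmono p x = 0 := by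
  rw [Hmono, dif_neg]
  rw [exists_bad_iff]; exact not_not_intro hg

theorem pow_neg_one_mul_self (c : ℕ) : ((-1 : ZMod p) ^ c) * ((-1 : ZMod p) ^ c) = 1 := by
  rw [← pow_add, ← two_mul, pow_mul, neg_one_sq, one_pow]

/-- `Bad` transfers between `x` and `Qtarget p 1 x m` away from index `m - 1`. -/
theorem bad_Qtarget_iff {x : Mono 2} {m : ℕ} (hm : m ∈ x.t) {j : ℕ} (hj : j + 1 < m) :
    Bad p j (Qtarget p 1 x m) ↔ Bad p j x := by
  have h3 : 3 ≤ m := x.ht m hm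
  have he : (Qtarget p 1 x m).e j = x.e j := by
    rw [Qtarget_e p hm, Finsupp.add_apply, Finsupp.single_apply,
      if_neg (by omega : ¬ m - 1 = j), add_zero]
  have ht : (j + 1 ∈ (Qtarget p 1 x m).t) ↔ j + 1 ∈ x.t := by
    rw [Qtarget_t, Finset.mem_erase]
    exact ⟨fun h => h.2, fun h => ⟨by omega, h⟩⟩
  unfold Bad
  rw [he, ht]

theorem Hop_Qmono (x : Mono 2) :
    Hop p (Qmono p 1 x) = ∑ m ∈ x.t,
      ((-1 : ZMod p) ^ ((x.t.filter (fun m' => m' < m)).card)) •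
        Hmono p (Qtarget p 1 x m) := by
  rw [Qmono, map_sum]
  exact Finset.sum_congr rfl fun m hm => by rw [map_smul, Hop_single]

/-- In either bad case, `m ∈ x.t` implies `k + 1 ≤ m` (minimality of `k`). -/
theorem mem_t_ge {x : Mono 2} {k : ℕ} (hmin : ∀ j, j < k → ¬ Bad p j x)
    {m : ℕ} (hm : m ∈ x.t) : k + 1 ≤ m := by
  have hb := bad_of_mem_t p hm
  have h3 : 3 ≤ m := x.ht m hm
  by_contra hc
  exact hmin (m - 1) (by omega) hb

/-- Case B main computation. -/
theorem Hmono_Qtarget_self {x : Mono 2} {k : ℕ} (hb : Bad p k x)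
    (hmin : ∀ j, j < k → ¬ Bad p j x) (hkt : k + 1 ∈ x.t) :
    Hmono p (Qtarget p 1 x (k + 1)) =
      ((-1 : ZMod p) ^ ((x.t.filter (fun m' => m' < k + 1)).card)) •
        Finsupp.single x (1 : ZMod p) := by
  set y := Qtarget p 1 x (k + 1) with hy
  have hk2 : 2 ≤ k := hb.1
  have hye : y.e = x.e + Finsupp.single k p := by
    have := Qtarget_e p hkt
    simpa using this
  have hyt : y.t = x.t.erase (k + 1) := Qtarget_t p x (k + 1)
  have hbady : Bad p k y := by
    refine ⟨hk2, Or.inl ?_⟩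
    rw [hye, Finsupp.add_apply, Finsupp.single_apply, if_pos rfl]
    omega
  have hminy : ∀ j, j < k → ¬ Bad p j y := by
    intro j hj hbj
    exact hmin j hj ((bad_Qtarget_iff p hkt (by omega)).1 hbj)
  rw [Hmono_eval p hbady hminy, if_neg (by rw [hyt]; exact Finset.notMem_erase _ _)]
  have hfil : y.t.filter (fun m' => m' < k + 1) = x.t.filter (fun m' => m' < k + 1) := by
    rw [hyt, Finset.filter_erase, Finset.erase_eq_of_notMem]
    simp
  have hsh : shiftE p y k hbady.1 = x := by
    refine Mono.ext' ?_ ?_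
    · show y.e - Finsupp.single k p = x.e
      rw [hye, add_tsub_cancel_right]
    · show insert (k + 1) y.t = x.t
      rw [hyt, Finset.insert_erase hkt]
  rw [hfil, hsh]

/-- Case B/C side terms vanish or match: for `m ∈ x.t` with `k + 2 ≤ m` and `k+1 ∈ x.t`,
`Hmono` of the target is zero. -/
theorem Hmono_Qtarget_zero {x : Mono 2} {k : ℕ} (hb : Bad p k x)
    (hmin : ∀ j, j < k → ¬ Bad p j x) (hkt : k + 1 ∈ x.t)
    {m : ℕ} (hm : m ∈ x.t) (hne : m ≠ k + 1) :
    Hmono p (Qtarget p 1 x m) = 0 := by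
  set y := Qtarget p 1 x m with hy
  have hk2 : 2 ≤ k := hb.1
  have hge : k + 2 ≤ m := by
    have := mem_t_ge p hmin hm
    omega
  have hyt : y.t = x.t.erase m := Qtarget_t p x m
  have hmem : k + 1 ∈ y.t := by
    rw [hyt, Finset.mem_erase]
    exact ⟨by omega, hkt⟩
  have hbady : Bad p k y := ⟨hk2, Or.inr hmem⟩
  have hminy : ∀ j, j < k → ¬ Bad p j y := by
    intro j hj hbj
    exact hmin j hj ((bad_Qtarget_iff p hm (by omega)).1 hbj)
  rw [Hmono_eval p hbady hminy, if_pos hmem]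

/-- Case C computation: for `m ∈ x.t` (when `k+1 ∉ x.t`, `p ≤ x.e k`),
`Hmono` of `Qtarget x m` is the corresponding target of the shifted monomial. -/
theorem Hmono_Qtarget_shift {x : Mono 2} {k : ℕ} (hb : Bad p k x)
    (hmin : ∀ j, j < k → ¬ Bad p j x) (hkt : k + 1 ∉ x.t) (hpe : p ≤ x.e k)
    {m : ℕ} (hm : m ∈ x.t) :
    Hmono p (Qtarget p 1 x m) =
      ((-1 : ZMod p) ^ ((x.t.filter (fun m' => m' < k + 1)).card)) •
        Finsupp.single (Qtarget p 1 (shiftE p x k hb.1) m) (1 : ZMod p) := by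
  set y := Qtarget p 1 x m with hy
  have hk2 : 2 ≤ k := hb.1
  have hge : k + 2 ≤ m := by
    have h1 := mem_t_ge p hmin hm
    rcases eq_or_lt_of_le h1 with h | h
    · exact absurd (h ▸ hm) hkt
    · omega
  have hye : y.e = x.e + Finsupp.single (m - 1) p := Qtarget_e p hm
  have hyt : y.t = x.t.erase m := Qtarget_t p x m
  have hle : Finsupp.single k p ≤ x.e := Finsupp.single_le_iff.2 hpe
  have hbady : Bad p k y := by
    refine ⟨hk2, Or.inl ?_⟩
    rw [hye, Finsupp.add_apply, Finsupp.single_apply, if_neg (by omega : ¬ m - 1 = k), add_zero]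
    exact hpe
  have hminy : ∀ j, j < k → ¬ Bad p j y := by
    intro j hj hbj
    exact hmin j hj ((bad_Qtarget_iff p hm (by omega)).1 hbj)
  have hnmem : k + 1 ∉ y.t := by
    rw [hyt, Finset.mem_erase]
    rintro ⟨-, h⟩; exact hkt h
  rw [Hmono_eval p hbady hminy, if_neg hnmem]
  have hfil : y.t.filter (fun m' => m' < k + 1) = x.t.filter (fun m' => m' < k + 1) := by
    rw [hyt, Finset.filter_erase, Finset.erase_eq_of_notMem]
    rw [Finset.mem_filter]
    rintro ⟨-, h⟩; omega
  have hmx' : m ∈ (shiftE p x k hb.1).t := by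
    show m ∈ insert (k + 1) x.t
    exact Finset.mem_insert_of_mem hm
  have hsh : shiftE p y k hbady.1 = Qtarget p 1 (shiftE p x k hb.1) m := by
    refine Mono.ext' ?_ ?_
    · show y.e - Finsupp.single k p = (Qtarget p 1 (shiftE p x k hb.1) m).e
      rw [Qtarget_e p hmx', hye]
      show x.e + Finsupp.single (m - 1) p - Finsupp.single k p =
        (x.e - Finsupp.single k p) + Finsupp.single (m - 1) p
      exact (tsub_add_eq_add_tsub hle).symm ▸ rfl
    · show insert (k + 1) y.t = (Qtarget p 1 (shiftE p x k hb.1) m).t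
      rw [hyt, Qtarget_t]
      show insert (k + 1) (x.t.erase m) = (insert (k + 1) x.t).erase m
      exact (Finset.erase_insert_of_ne (by omega : k + 1 ≠ m)).symm
  rw [hfil, hsh]

theorem Qtarget_shift_self {x : Mono 2} {k : ℕ} (hk2 : 2 ≤ k) (hkt : k + 1 ∉ x.t)
    (hpe : p ≤ x.e k) : Qtarget p 1 (shiftE p x k hk2) (k + 1) = x := by
  have hle : Finsupp.single k p ≤ x.e := Finsupp.single_le_iff.2 hpe
  have hmem : k + 1 ∈ (shiftE p x k hk2).t := Finset.mem_insert_self _ _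
  refine Mono.ext' ?_ ?_
  · rw [Qtarget_e p hmem]
    show (x.e - Finsupp.single k p) + Finsupp.single (k + 1 - 1) p = x.e
    rw [Nat.add_sub_cancel, tsub_add_cancel_of_le hle]
  · rw [Qtarget_t]
    show (insert (k + 1) x.t).erase (k + 1) = x.t
    exact Finset.erase_insert hkt

theorem key (x : Mono 2) :
    Qop p 2 1 (Hmono p x) + Hop p (Qmono p 1 x) =
      Finsupp.single x (1 : ZMod p) - Pmono p x := by
  by_cases h : ∃ k, Bad p k x
  · have hng : ¬ Gd p x := exists_bad_iff.1 h
    rw [Pmono, if_neg hng, sub_zero]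
    have hb : Bad p (Nat.find h) x := Nat.find_spec h
    have hmin : ∀ j, j < Nat.find h → ¬ Bad p j x := fun j hj => Nat.find_min h hj
    set k := Nat.find h with hkdef
    have hk2 : 2 ≤ k := hb.1
    rw [Hop_Qmono]
    by_cases hkt : k + 1 ∈ x.t
    · -- Case B
      rw [Hmono_eval p hb hmin, if_pos hkt, map_zero, zero_add]
      rw [Finset.sum_eq_single_of_mem (k + 1) hkt (fun m hm hne => by
        rw [Hmono_Qtarget_zero p hb hmin hkt hm hne, smul_zero])]
      rw [Hmono_Qtarget_self p hb hmin hkt, smul_smul, pow_neg_one_mul_self, one_smul]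
    · -- Case C
      have hpe : p ≤ x.e k := hb.2.resolve_right hkt
      have hle : Finsupp.single k p ≤ x.e := Finsupp.single_le_iff.2 hpe
      rw [Hmono_eval p hb hmin, if_neg hkt, map_smul, Qop_single]
      have hx't : (shiftE p x k hb.1).t = insert (k + 1) x.t := rfl
      rw [Qmono, hx't, Finset.sum_insert hkt, Qtarget_shift_self p hb.1 hkt hpe]
      have hfilins : (insert (k + 1) x.t).filter (fun m' => m' < k + 1) =
          x.t.filter (fun m' => m' < k + 1) := by
        rw [Finset.filter_insert, if_neg (lt_irrefl _)]
      rw [hfilins, smul_add, smul_smul, pow_neg_one_mul_self, one_smul,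
        Finset.smul_sum, add_assoc, ← Finset.sum_add_distrib]
      convert add_zero _ using 2
      refine Finset.sum_eq_zero fun m hm => ?_
      have hgem : k + 1 ≤ m := mem_t_ge p hmin hm
      have hgem2 : k + 2 ≤ m := by
        rcases eq_or_lt_of_le hgem with hh | hh
        · exact absurd (hh ▸ hm) hkt
        · omega
      rw [Hmono_Qtarget_shift p hb hmin hkt hpe hm]
      have hfil2 : (insert (k + 1) x.t).filter (fun m' => m' < m) =
          insert (k + 1) (x.t.filter (fun m' => m' < m)) := by
        rw [Finset.filter_insert, if_pos (by omega : k + 1 < m)]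
      have hcard2 : ((insert (k + 1) x.t).filter (fun m' => m' < m)).card =
          (x.t.filter (fun m' => m' < m)).card + 1 := by
        rw [hfil2, Finset.card_insert_of_notMem (fun hc => hkt (Finset.mem_of_mem_filter _ hc))]
      rw [hcard2, smul_smul, smul_smul, ← add_smul]
      convert zero_smul (ZMod p) _
      set c := (x.t.filter (fun m' => m' < k + 1)).card
      set d := (x.t.filter (fun m' => m' < m)).card
      rw [pow_succ]
      ring
  · have hg : Gd p x := by_contra fun hg => h (exists_bad_iff.2 hg)
    rw [Hmono, dif_neg h, map_zero, zero_add, Qmono, hg.1, Finset.sum_empty, map_zero,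
      Pmono, if_pos hg, sub_self]

theorem single_eq_smul (x : Mono 2) (c : ZMod p) :
    (Finsupp.single x c : B p 2) = c • Finsupp.single x 1 := by
  rw [Finsupp.smul_single, smul_eq_mul, mul_one]

theorem homotopy (z : B p 2) :
    Qop p 2 1 (Hop p z) + Hop p (Qop p 2 1 z) + Pop p z = z := by
  have hext : (Qop p 2 1).comp (Hop p) + (Hop p).comp (Qop p 2 1) + Pop p
      = LinearMap.id := by
    apply Finsupp.lhom_ext
    intro x c
    rw [single_eq_smul]
    simp only [LinearMap.add_apply, LinearMap.comp_apply, LinearMap.id_apply, map_smul]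
    rw [Qop_single, Hop_single, Pop_single]
    congr 1
    rw [key p x, sub_add_cancel]
  calc Qop p 2 1 (Hop p z) + Hop p (Qop p 2 1 z) + Pop p z
      = ((Qop p 2 1).comp (Hop p) + (Hop p).comp (Qop p 2 1) + Pop p) z := rfl
    _ = z := by rw [hext]; rfl

theorem Pop_mem (z : B p 2) :
    Pop p z ∈ monSpan p 2 (fun x => x.t = ∅ ∧ ∀ k, 2 ≤ k → x.e k < p) := by
  rw [Pop, Finsupp.lsum_apply, Finsupp.sum]
  refine Submodule.sum_mem _ fun x hx => ?_
  rw [LinearMap.toSpanSingleton_apply]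
  refine Submodule.smul_mem _ _ ?_
  rw [Pmono]
  split_ifs with hg
  · exact Submodule.subset_span ⟨x, hg, rfl⟩
  · exact Submodule.zero_mem _

theorem Pop_Qmono (x : Mono 2) : Pop p (Qmono p 1 x) = 0 := by
  rw [Qmono, map_sum]
  refine Finset.sum_eq_zero fun m hm => ?_
  rw [map_smul, Pop_single, Pmono, if_neg, smul_zero]
  rintro ⟨ht, he⟩
  have h3 : 3 ≤ m := x.ht m hm
  have := he (m - 1) (by omega)
  rw [Qtarget_e p hm, Finsupp.add_apply, Finsupp.single_apply, if_pos rfl] at this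
  omega

theorem Pop_Qop (w : B p 2) : Pop p (Qop p 2 1 w) = 0 := by
  have hext : (Pop p).comp (Qop p 2 1) = 0 := by
    apply Finsupp.lhom_ext
    intro x c
    rw [single_eq_smul]
    simp only [LinearMap.comp_apply, LinearMap.zero_apply, map_smul]
    rw [Qop_single, Pop_Qmono, smul_zero]
  calc Pop p (Qop p 2 1 w) = ((Pop p).comp (Qop p 2 1)) w := rfl
    _ = 0 := by rw [hext]; rfl

theorem Pop_fix {z : B p 2}
    (hz : z ∈ monSpan p 2 (fun x => x.t = ∅ ∧ ∀ k, 2 ≤ k → x.e k < p)) :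
    Pop p z = z := by
  have hle : monSpan p 2 (fun x => x.t = ∅ ∧ ∀ k, 2 ≤ k → x.e k < p)
      ≤ LinearMap.ker (Pop p - LinearMap.id) := by
    rw [monSpan, Submodule.span_le]
    rintro _ ⟨x, hx, rfl⟩
    simp only [SetLike.mem_coe, LinearMap.mem_ker, LinearMap.sub_apply, LinearMap.id_apply]
    rw [Pop_single, Pmono, if_pos (show Gd p x from hx), sub_self]
  have := hle hz
  rw [LinearMap.mem_ker, LinearMap.sub_apply, LinearMap.id_apply, sub_eq_zero] at this
  exact this

end MargolisAux

/-- The `Q₁`-Margolis homology of `B₂` is `F_p[ζ₁] ⊗ T₁(ζ₂, ζ₃, …)`: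
the subspace spanned by the monomials `ζ₁^{e₁} ζ₂^{e₂} ⋯` with `e_k < p` for `k ≥ 2`
(and no exterior factors) lies in `ker Q₁`, meets `im Q₁` only in `0`, and maps
isomorphically onto `ker Q₁ / im Q₁`. -/
theorem margolis_Q1_of_B2 (p : ℕ) (hp : p.Prime) (hodd : Odd p) :
    monSpan p 2 (fun x => x.t = ∅ ∧ ∀ k, 2 ≤ k → x.e k < p) ≤
        LinearMap.ker (Qop p 2 1) ∧
    monSpan p 2 (fun x => x.t = ∅ ∧ ∀ k, 2 ≤ k → x.e k < p) ⊓
        LinearMap.range (Qop p 2 1) = ⊥ ∧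
    LinearMap.ker (Qop p 2 1) ≤
      monSpan p 2 (fun x => x.t = ∅ ∧ ∀ k, 2 ≤ k → x.e k < p) ⊔
        LinearMap.range (Qop p 2 1) := by
  open MargolisAux in
  refine ⟨?_, ?_, ?_⟩
  · rw [monSpan, Submodule.span_le]
    rintro _ ⟨x, hx, rfl⟩
    simp only [SetLike.mem_coe, LinearMap.mem_ker]
    rw [MargolisAux.Qop_single, Qmono, hx.1, Finset.sum_empty]
  · rw [eq_bot_iff]
    intro z hz
    obtain ⟨hz1, hz2⟩ := Submodule.mem_inf.1 hz
    obtain ⟨w, rfl⟩ := hz2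
    have h1 : Pop p (Qop p 2 1 w) = Qop p 2 1 w := Pop_fix p hz1
    have h2 : Pop p (Qop p 2 1 w) = 0 := Pop_Qop p w
    rw [Submodule.mem_bot, ← h1, h2]
  · intro z hz
    rw [LinearMap.mem_ker] at hz
    have hid := homotopy p z
    rw [hz, map_zero, add_zero] at hid
    rw [← hid]
    exact Submodule.add_mem _ (Submodule.mem_sup_right ⟨Hop p z, rfl⟩)
      (Submodule.mem_sup_left (Pop_mem p z))
end

section
/- Let R = F_p[ζ_2, ζ_3, …] ⊗ Λ(τ̄_3, τ̄_4, …) ⊆ B₂ and, for k ≥ 0, let W_2(k) ⊆ R be the span of the monomials of R of weight exactly p²k; W_2(k) is stable under Q_0 and Q_1. Write k = a_0 + a_1 p + a_2 p² + ⋯ for the base-p expansion of k. Then M_*(W_2(k); Q_0) is the one-dimensional F_p-vector space spanned by the class of ζ_2^k, and M_*(W_2(k); Q_1) is the one-dimensional F_p-vector space spanned by the class of ζ_2^{a_0} ζ_3^{a_1} ζ_4^{a_2} ⋯. -/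
/-- `W₂(k) ⊆ R ⊆ B₂`: the span of the monomials of `R` (no `ζ₁`-factor) of weight
exactly `p²k`. -/
noncomputable def Wsub (p k : ℕ) : Submodule (ZMod p) (B p 2) :=
  monSpan p 2 (fun x => x.e 1 = 0 ∧ x.wt p = p ^ 2 * k)

/-- The monomial `ζ₂^k` of `B₂`. -/
noncomputable def zeta2pow (k : ℕ) : Mono 2 where
  e := Finsupp.single 2 k
  t := ∅
  he := by simp
  ht := fun m hm => absurd hm (Finset.notMem_empty m)


namespace MH

open Finsupp

lemma mono_ext {n : ℕ} {x y : Mono n} (he : x.e = y.e) (ht : x.t = y.t) : x = y := by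
  cases x; cases y; simp_all

variable (p r : ℕ)

/-- The set of "active" slots of a monomial: `m ≥ 3` such that `τ̄_m` occurs or
the exponent of `ζ_{m-r}` is at least `p^r`. -/
def act (x : Mono 2) : Finset ℕ :=
  x.t ∪ (x.e.support.image (· + r)).filter (fun m => 3 ≤ m ∧ p ^ r ≤ x.e (m - r))

lemma three_le_of_mem_act {x : Mono 2} {m : ℕ} (h : m ∈ act p r x) : 3 ≤ m := by
  rcases Finset.mem_union.1 h with h | h
  · exact x.ht m h
  · exact (Finset.mem_filter.1 h).2.1

lemma mem_act (hp : 0 < p) (hr : r ≤ 1) {x : Mono 2} {m : ℕ} :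
    m ∈ act p r x ↔ m ∈ x.t ∨ (3 ≤ m ∧ p ^ r ≤ x.e (m - r)) := by
  constructor
  · intro h
    rcases Finset.mem_union.1 h with h | h
    · exact Or.inl h
    · exact Or.inr (Finset.mem_filter.1 h).2
  · rintro (h | ⟨h3, hN⟩)
    · exact Finset.mem_union_left _ h
    · refine Finset.mem_union_right _ (Finset.mem_filter.2 ⟨?_, h3, hN⟩)
      refine Finset.mem_image.2 ⟨m - r, ?_, ?_⟩
      · refine Finsupp.mem_support_iff.2 (fun h0 => ?_)
        rw [h0] at hN
        have : 0 < p ^ r := Nat.pow_pos hp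
        omega
      · show m - r + r = m
        omega

/-- Add `τ̄_m` and remove `p^r` from the exponent of `ζ_{m-r}`. -/
noncomputable def addTau (x : Mono 2) (m : ℕ) (hm : 3 ≤ m) : Mono 2 where
  e := x.e - Finsupp.single (m - r) (p ^ r)
  t := insert m x.t
  he := by simp [Finsupp.tsub_apply, x.he]
  ht := fun m' hm' => (Finset.mem_insert.1 hm').elim (fun h => h ▸ hm) (x.ht m')

noncomputable def hmono (x : Mono 2) : B p 2 :=
  if h : (act p r x).Nonempty then
    if ((act p r x).max' h) ∈ x.t then 0
    else ((-1 : ZMod p) ^ x.t.card) •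
      Finsupp.single (addTau p r x ((act p r x).max' h)
        (three_le_of_mem_act p r (Finset.max'_mem _ h))) 1
  else 0

noncomputable def hop : B p 2 →ₗ[ZMod p] B p 2 :=
  Finsupp.lsum (ZMod p) fun x => LinearMap.toSpanSingleton (ZMod p) (B p 2) (hmono p r x)

noncomputable def pimono (x : Mono 2) : B p 2 :=
  if (act p r x).Nonempty then 0 else Finsupp.single x 1

noncomputable def piop : B p 2 →ₗ[ZMod p] B p 2 :=
  Finsupp.lsum (ZMod p) fun x => LinearMap.toSpanSingleton (ZMod p) (B p 2) (pimono p r x)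

lemma Qop_single {n : ℕ} (x : Mono n) (c : ZMod p) :
    Qop p n r (Finsupp.single x c) = c • Qmono p r x := by
  rw [Qop, Finsupp.lsum_single, LinearMap.toSpanSingleton_apply]

lemma hop_single (x : Mono 2) (c : ZMod p) :
    hop p r (Finsupp.single x c) = c • hmono p r x := by
  rw [hop, Finsupp.lsum_single, LinearMap.toSpanSingleton_apply]

lemma piop_single (x : Mono 2) (c : ZMod p) :
    piop p r (Finsupp.single x c) = c • pimono p r x := by
  rw [piop, Finsupp.lsum_single, LinearMap.toSpanSingleton_apply]

lemma Qtarget_e (hr : r ≤ 1) {x : Mono 2} {m : ℕ} (hm : 3 ≤ m) :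
    (Qtarget p r x m).e = x.e + Finsupp.single (m - r) (p ^ r) := by
  simp only [Qtarget, if_pos (show r < m by omega)]

lemma Qtarget_t {n : ℕ} (x : Mono n) (m : ℕ) : (Qtarget p r x m).t = x.t.erase m := rfl

lemma act_Qtarget (hp : 0 < p) (hr : r ≤ 1) {x : Mono 2} {m : ℕ} (hm : m ∈ x.t) :
    act p r (Qtarget p r x m) = act p r x := by
  have hm3 : 3 ≤ m := x.ht m hm
  ext m'
  rw [mem_act p r hp hr, mem_act p r hp hr, Qtarget_t, Qtarget_e p r hr hm3]
  by_cases h3 : 3 ≤ m'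
  · by_cases hmm : m' = m
    · subst hmm
      simp only [Finset.mem_erase, ne_eq, not_true_eq_false, false_and, false_or,
        Finsupp.add_apply, Finsupp.single_apply, eq_self_iff_true, if_true]
      constructor
      · intro _; exact Or.inl hm
      · intro _; exact ⟨h3, by omega⟩
    · have hne : ¬ (m - r = m' - r) := by omega
      simp [Finset.mem_erase, hmm, Finsupp.add_apply, Finsupp.single_apply, hne]
  · have h1 : m' ∉ x.t := fun h => h3 (x.ht m' h)
    simp [Finset.mem_erase, h1, h3]

lemma act_addTau (hp : 0 < p) (hr : r ≤ 1) {x : Mono 2} {m : ℕ} (hm : 3 ≤ m)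
    (hN : p ^ r ≤ x.e (m - r)) :
    act p r (addTau p r x m hm) = act p r x := by
  ext m'
  rw [mem_act p r hp hr, mem_act p r hp hr]
  show m' ∈ insert m x.t ∨ (3 ≤ m' ∧ p ^ r ≤ (x.e - Finsupp.single (m - r) (p ^ r)) (m' - r)) ↔ _
  rw [Finsupp.tsub_apply]
  by_cases hmm : m' = m
  · subst hmm
    simp only [Finset.mem_insert, true_or, Finsupp.single_apply, if_pos rfl, true_iff]
    exact Or.inr ⟨hm, hN⟩
  · by_cases h3 : 3 ≤ m'
    · have hne : ¬ (m - r = m' - r) := by omega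
      simp [Finset.mem_insert, hmm, Finsupp.single_apply, hne]
    · have h1 : m' ∉ x.t := fun h => h3 (x.ht m' h)
      simp [Finset.mem_insert, hmm, h1, h3]

lemma Qtarget_addTau_self (hr : r ≤ 1) {x : Mono 2} {m : ℕ} (hm : 3 ≤ m)
    (hmt : m ∉ x.t) (hN : p ^ r ≤ x.e (m - r)) :
    Qtarget p r (addTau p r x m hm) m = x := by
  refine mono_ext ?_ ?_
  · rw [Qtarget_e p r hr hm]
    show x.e - Finsupp.single (m - r) (p ^ r) + Finsupp.single (m - r) (p ^ r) = x.e
    ext a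
    rw [Finsupp.add_apply, Finsupp.tsub_apply]
    by_cases ha : m - r = a
    · subst ha; simp only [Finsupp.single_apply, eq_self_iff_true, if_true]; omega
    · simp [Finsupp.single_apply, ha]
  · show (insert m x.t).erase m = x.t
    exact Finset.erase_insert hmt

lemma addTau_Qtarget_self (hr : r ≤ 1) {x : Mono 2} {m : ℕ} (hm : m ∈ x.t) (hm3 : 3 ≤ m) :
    addTau p r (Qtarget p r x m) m hm3 = x := by
  have hm3 : 3 ≤ m := x.ht m hm
  refine mono_ext ?_ ?_
  · show (Qtarget p r x m).e - Finsupp.single (m - r) (p ^ r) = x.e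
    rw [Qtarget_e p r hr hm3]
    ext a
    rw [Finsupp.tsub_apply, Finsupp.add_apply]
    omega
  · show insert m (x.t.erase m) = x.t
    exact Finset.insert_erase hm

lemma Qtarget_addTau_comm (hr : r ≤ 1) {x : Mono 2} {m m' : ℕ} (hm : 3 ≤ m)
    (hm' : m' ∈ x.t) (hne : m' ≠ m) (hN : p ^ r ≤ x.e (m - r)) :
    Qtarget p r (addTau p r x m hm) m' = addTau p r (Qtarget p r x m') m hm := by
  have hm'3 : 3 ≤ m' := x.ht m' hm'
  refine mono_ext ?_ ?_
  · rw [Qtarget_e p r hr hm'3]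
    show (x.e - Finsupp.single (m - r) (p ^ r)) + Finsupp.single (m' - r) (p ^ r)
        = (Qtarget p r x m').e - Finsupp.single (m - r) (p ^ r)
    rw [Qtarget_e p r hr hm'3]
    ext a
    rw [Finsupp.add_apply, Finsupp.tsub_apply, Finsupp.tsub_apply, Finsupp.add_apply]
    by_cases ha : m - r = a
    · subst ha
      have : ¬ (m' - r = m - r) := by omega
      simp only [Finsupp.single_apply, if_pos rfl, if_neg this]
      omega
    · simp only [Finsupp.single_apply, if_neg ha]
      omega
  · show (insert m x.t).erase m' = insert m ((Qtarget p r x m').t)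
    rw [Qtarget_t]
    exact Finset.erase_insert_of_ne (fun h => hne h.symm)

/-- weight of the polynomial part -/
def Ews (f : ℕ →₀ ℕ) : ℕ := f.sum (fun k a => a * p ^ k)

lemma Ews_add (f g : ℕ →₀ ℕ) : Ews p (f + g) = Ews p f + Ews p g :=
  Finsupp.sum_add_index' (fun _ => zero_mul _) (fun _ b₁ b₂ => add_mul b₁ b₂ _)

lemma Ews_single (a b : ℕ) : Ews p (Finsupp.single a b) = b * p ^ a :=
  Finsupp.sum_single_index (zero_mul _)

lemma wt_eq (x : Mono 2) : x.wt p = Ews p x.e + ∑ m ∈ x.t, p ^ m := rfl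

lemma wt_Qtarget (hr : r ≤ 1) {x : Mono 2} {m : ℕ} (hm : m ∈ x.t) :
    (Qtarget p r x m).wt p = x.wt p := by
  have hm3 : 3 ≤ m := x.ht m hm
  rw [wt_eq, wt_eq, Qtarget_e p r hr hm3, Qtarget_t, Ews_add, Ews_single]
  have h1 : p ^ r * p ^ (m - r) = p ^ m := by
    rw [← pow_add]; congr 1; omega
  have h2 : ∑ m' ∈ x.t.erase m, p ^ m' + p ^ m = ∑ m' ∈ x.t, p ^ m' :=
    Finset.sum_erase_add x.t _ hm
  omega

lemma e_eq_addTau_e_add (hr : r ≤ 1) {x : Mono 2} {m : ℕ} (hm : 3 ≤ m)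
    (hN : p ^ r ≤ x.e (m - r)) :
    x.e = (addTau p r x m hm).e + Finsupp.single (m - r) (p ^ r) := by
  show x.e = (x.e - Finsupp.single (m - r) (p ^ r)) + Finsupp.single (m - r) (p ^ r)
  ext a
  rw [Finsupp.add_apply, Finsupp.tsub_apply]
  by_cases ha : m - r = a
  · subst ha; simp only [Finsupp.single_apply, eq_self_iff_true, if_true]; omega
  · simp [Finsupp.single_apply, ha]

lemma wt_addTau (hr : r ≤ 1) {x : Mono 2} {m : ℕ} (hm : 3 ≤ m) (hmt : m ∉ x.t)
    (hN : p ^ r ≤ x.e (m - r)) :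
    (addTau p r x m hm).wt p = x.wt p := by
  rw [wt_eq, wt_eq]
  conv_rhs => rw [e_eq_addTau_e_add p r hr hm hN]
  rw [Ews_add, Ews_single]
  have h1 : p ^ r * p ^ (m - r) = p ^ m := by rw [← pow_add]; congr 1; omega
  have h2 : ∑ m' ∈ (insert m x.t), p ^ m' = p ^ m + ∑ m' ∈ x.t, p ^ m' :=
    Finset.sum_insert hmt
  show Ews p (addTau p r x m hm).e + ∑ m' ∈ (insert m x.t), p ^ m' = _
  omega

lemma e1_Qtarget (hr : r ≤ 1) {x : Mono 2} {m : ℕ} (hm : 3 ≤ m) :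
    (Qtarget p r x m).e 1 = x.e 1 := by
  rw [Qtarget_e p r hr hm, Finsupp.add_apply, Finsupp.single_apply,
    if_neg (show ¬ (m - r = 1) by omega), add_zero]

lemma e1_addTau (hr : r ≤ 1) {x : Mono 2} {m : ℕ} (hm : 3 ≤ m) :
    (addTau p r x m hm).e 1 = x.e 1 := by
  show (x.e - Finsupp.single (m - r) (p ^ r)) 1 = x.e 1
  rw [Finsupp.tsub_apply, Finsupp.single_apply, if_neg (show ¬ (m - r = 1) by omega)]
  omega


lemma max'_congr {s s' : Finset ℕ} (h : s = s') (hs : s.Nonempty) (hs' : s'.Nonempty) :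
    s.max' hs = s'.max' hs' := by subst h; rfl

lemma hmono_eq_of (x : Mono 2) (h : (act p r x).Nonempty) {m0 : ℕ}
    (hmax : (act p r x).max' h = m0) (hm0t : m0 ∉ x.t) (hm03 : 3 ≤ m0) :
    hmono p r x = ((-1 : ZMod p) ^ x.t.card) •
      Finsupp.single (addTau p r x m0 hm03) (1 : ZMod p) := by
  subst hmax
  rw [hmono, dif_pos h, if_neg hm0t]

lemma hmono_eq_zero_of_mem (x : Mono 2) (h : (act p r x).Nonempty) {m0 : ℕ}
    (hmax : (act p r x).max' h = m0) (hm0t : m0 ∈ x.t) :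
    hmono p r x = 0 := by
  subst hmax
  rw [hmono, dif_pos h, if_pos hm0t]

lemma key (hp : 0 < p) (hr : r ≤ 1) (x : Mono 2) :
    Qop p 2 r (hmono p r x) + hop p r (Qmono p r x)
      = Finsupp.single x 1 - pimono p r x := by
  have hQsum : hop p r (Qmono p r x) =
      ∑ m ∈ x.t, ((-1 : ZMod p) ^ ((x.t.filter (fun m' => m' < m)).card)) •
        hmono p r (Qtarget p r x m) := by
    rw [Qmono, map_sum]
    refine Finset.sum_congr rfl fun m _ => ?_
    rw [map_smul, hop_single, one_smul]
  by_cases hne : (act p r x).Nonempty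
  · have hm0mem := Finset.max'_mem _ hne
    set m0 := (act p r x).max' hne with hm0def
    have hm03 : 3 ≤ m0 := three_le_of_mem_act p r hm0mem
    have htle : ∀ m ∈ x.t, m ≤ m0 := fun m hm =>
      Finset.le_max' _ m (Finset.mem_union_left _ hm)
    rw [pimono, if_pos hne, sub_zero, hQsum]
    by_cases hmt : m0 ∈ x.t
    · -- Case B : the maximal active slot carries an exterior generator
      rw [hmono_eq_zero_of_mem p r x hne hm0def.symm hmt, map_zero, zero_add]
      rw [Finset.sum_eq_single_of_mem m0 hmt (fun b hb hbne => ?_)]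
      · have hact : act p r (Qtarget p r x m0) = act p r x := act_Qtarget p r hp hr hmt
        have hney : (act p r (Qtarget p r x m0)).Nonempty := by rw [hact]; exact hne
        have hmax : (act p r (Qtarget p r x m0)).max' hney = m0 :=
          (max'_congr hact hney hne).trans hm0def.symm
        have hm0notin : m0 ∉ (Qtarget p r x m0).t := by
          rw [Qtarget_t]; exact fun h => (Finset.mem_erase.1 h).1 rfl
        rw [hmono_eq_of p r _ hney hmax hm0notin hm03,
          addTau_Qtarget_self p r hr hmt hm03]
        have hfil : x.t.filter (fun m' => m' < m0) = x.t.erase m0 := by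
          ext a
          simp only [Finset.mem_filter, Finset.mem_erase]
          constructor
          · rintro ⟨h1, h2⟩; exact ⟨by omega, h1⟩
          · rintro ⟨h1, h2⟩; exact ⟨h2, lt_of_le_of_ne (htle a h2) h1⟩
        have hcard : (Qtarget p r x m0).t.card = (x.t.erase m0).card := by rw [Qtarget_t]
        rw [hfil, hcard, smul_smul, ← mul_pow, neg_mul_neg, one_mul, one_pow, one_smul]
      · have hact : act p r (Qtarget p r x b) = act p r x := act_Qtarget p r hp hr hb
        have hney : (act p r (Qtarget p r x b)).Nonempty := by rw [hact]; exact hne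
        have hmax : (act p r (Qtarget p r x b)).max' hney = m0 :=
          (max'_congr hact hney hne).trans hm0def.symm
        have hm0in : m0 ∈ (Qtarget p r x b).t := by
          rw [Qtarget_t]; exact Finset.mem_erase.2 ⟨fun h => hbne h.symm, hmt⟩
        rw [hmono_eq_zero_of_mem p r _ hney hmax hm0in, smul_zero]
    · -- Case A : the maximal active slot is a high power of a polynomial generator
      have hN : p ^ r ≤ x.e (m0 - r) := by
        rcases (mem_act p r hp hr).1 hm0mem with h | h
        · exact absurd h hmt
        · exact h.2
      have hltm0 : ∀ m ∈ x.t, m < m0 := fun m hm =>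
        lt_of_le_of_ne (htle m hm) (fun h => hmt (h ▸ hm))
      rw [hmono_eq_of p r x hne hm0def.symm hmt hm03, map_smul, Qop_single, one_smul]
      have hx't : (addTau p r x m0 hm03).t = insert m0 x.t := rfl
      rw [Qmono, hx't, Finset.sum_insert hmt]
      have hfilA : (insert m0 x.t).filter (fun m' => m' < m0) = x.t := by
        rw [Finset.filter_insert, if_neg (lt_irrefl m0), Finset.filter_true_of_mem hltm0]
      rw [hfilA, Qtarget_addTau_self p r hr hm03 hmt hN]
      have hsq : ((-1 : ZMod p) ^ x.t.card) * ((-1 : ZMod p) ^ x.t.card) = 1 := by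
        rw [← mul_pow, neg_mul_neg, one_mul, one_pow]
      rw [smul_add, smul_smul, hsq, one_smul, Finset.smul_sum, add_assoc,
        ← Finset.sum_add_distrib]
      have hzero : ∀ m ∈ x.t,
          ((-1 : ZMod p) ^ x.t.card) •
              (((-1 : ZMod p) ^ (((insert m0 x.t).filter (fun m' => m' < m)).card)) •
                Finsupp.single (Qtarget p r (addTau p r x m0 hm03) m) (1 : ZMod p))
            + ((-1 : ZMod p) ^ ((x.t.filter (fun m' => m' < m)).card)) •
                hmono p r (Qtarget p r x m) = 0 := by
        intro m hm
        have hmne : m ≠ m0 := fun h => hmt (h ▸ hm)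
        have hact : act p r (Qtarget p r x m) = act p r x := act_Qtarget p r hp hr hm
        have hney : (act p r (Qtarget p r x m)).Nonempty := by rw [hact]; exact hne
        have hmax : (act p r (Qtarget p r x m)).max' hney = m0 :=
          (max'_congr hact hney hne).trans hm0def.symm
        have hm0notin : m0 ∉ (Qtarget p r x m).t := by
          rw [Qtarget_t]; exact fun h => hmt (Finset.mem_of_mem_erase h)
        rw [hmono_eq_of p r _ hney hmax hm0notin hm03,
          ← Qtarget_addTau_comm p r hr hm03 hm hmne hN]
        have hfil : (insert m0 x.t).filter (fun m' => m' < m) = x.t.filter (fun m' => m' < m) := by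
          rw [Finset.filter_insert, if_neg (by have := hltm0 m hm; omega)]
        rw [hfil]
        have hcard : (Qtarget p r x m).t.card + 1 = x.t.card := by
          rw [Qtarget_t]; exact Finset.card_erase_add_one hm
        rw [smul_smul, smul_smul, ← add_smul, ← hcard, pow_succ]
        convert zero_smul (ZMod p) (Finsupp.single (Qtarget p r (addTau p r x m0 hm03) m) (1 : ZMod p))
        ring
      rw [Finset.sum_eq_zero hzero, add_zero]
  · -- Case C : no active slot
    have ht0 : x.t = ∅ := Finset.eq_empty_of_forall_notMem fun m hm =>
      hne ⟨m, Finset.mem_union_left _ hm⟩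
    rw [hmono, dif_neg hne, map_zero, zero_add, hQsum, ht0, Finset.sum_empty,
      pimono, if_neg hne, sub_self]

lemma key' (hp : 0 < p) (hr : r ≤ 1) (v : B p 2) :
    Qop p 2 r (hop p r v) + hop p r (Qop p 2 r v) = v - piop p r v := by
  induction v using Finsupp.induction_linear with
  | zero => simp
  | add f g hf hg =>
    simp only [map_add]
    rw [add_add_add_comm, hf, hg]
    abel
  | single a b =>
    rw [hop_single, Qop_single, piop_single, map_smul, map_smul, ← smul_add,
      key p r hp hr a, smul_sub, Finsupp.smul_single, smul_eq_mul, mul_one]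

lemma single_mem_Wsub (k : ℕ) {x : Mono 2} (hx : x.e 1 = 0 ∧ x.wt p = p ^ 2 * k) :
    (Finsupp.single x 1 : B p 2) ∈ Wsub p k :=
  Submodule.subset_span ⟨x, hx, rfl⟩

lemma mapW (k : ℕ) (F : B p 2 →ₗ[ZMod p] B p 2) (M : Submodule (ZMod p) (B p 2))
    (hF : ∀ x : Mono 2, (x.e 1 = 0 ∧ x.wt p = p ^ 2 * k) → F (Finsupp.single x 1) ∈ M)
    {v : B p 2} (hv : v ∈ Wsub p k) : F v ∈ M := by
  have hv' : v ∈ Submodule.span (ZMod p)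
      ((fun x => Finsupp.single x (1 : ZMod p)) ''
        {x : Mono 2 | x.e 1 = 0 ∧ x.wt p = p ^ 2 * k}) := hv
  have h2 := Submodule.apply_mem_span_image_of_mem_span (f := F) hv'
  refine Submodule.span_le.2 ?_ h2
  rintro _ ⟨_, ⟨x, hx, rfl⟩, rfl⟩
  exact hF x hx

lemma Qmono_mem (k : ℕ) (hr : r ≤ 1) {x : Mono 2} (hx : x.e 1 = 0 ∧ x.wt p = p ^ 2 * k) :
    Qmono p r x ∈ Wsub p k := by
  rw [Qmono]
  refine Submodule.sum_mem _ fun m hm => Submodule.smul_mem _ _ ?_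
  refine single_mem_Wsub p k ⟨?_, ?_⟩
  · rw [e1_Qtarget p r hr (x.ht m hm)]; exact hx.1
  · rw [wt_Qtarget p r hr hm]; exact hx.2

lemma hmono_mem (k : ℕ) (hp : 0 < p) (hr : r ≤ 1) {x : Mono 2}
    (hx : x.e 1 = 0 ∧ x.wt p = p ^ 2 * k) :
    hmono p r x ∈ Wsub p k := by
  by_cases hne : (act p r x).Nonempty
  · by_cases hmt : (act p r x).max' hne ∈ x.t
    · rw [hmono_eq_zero_of_mem p r x hne rfl hmt]; exact Submodule.zero_mem _
    · have hm03 : 3 ≤ (act p r x).max' hne := three_le_of_mem_act p r (Finset.max'_mem _ hne)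
      have hN : p ^ r ≤ x.e ((act p r x).max' hne - r) := by
        rcases (mem_act p r hp hr).1 (Finset.max'_mem _ hne) with h | h
        · exact absurd h hmt
        · exact h.2
      rw [hmono_eq_of p r x hne rfl hmt hm03]
      refine Submodule.smul_mem _ _ (single_mem_Wsub p k ⟨?_, ?_⟩)
      · rw [e1_addTau p r hr hm03]; exact hx.1
      · rw [wt_addTau p r hr hm03 hmt hN]; exact hx.2
  · rw [hmono, dif_neg hne]; exact Submodule.zero_mem _

lemma digit_unique (hp : 2 ≤ p) :
    ∀ (L : ℕ) (g : ℕ → ℕ) (k : ℕ), (∀ j, g j < p) → (∀ j, L ≤ j → g j = 0) →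
      (∑ j ∈ Finset.range L, g j * p ^ j = k) → ∀ j, g j = k / p ^ j % p := by
  intro L
  induction L with
  | zero =>
    intro g k hlt hz hsum j
    rw [Finset.sum_range_zero] at hsum
    rw [hz j (Nat.zero_le j), ← hsum, Nat.zero_div, Nat.zero_mod]
  | succ L ih =>
    intro g k hlt hz hsum j
    have hre : k = g 0 + p * ∑ i ∈ Finset.range L, g (i + 1) * p ^ i := by
      rw [← hsum, Finset.sum_range_succ', Finset.mul_sum, add_comm]
      congr 1
      · rw [pow_zero, mul_one]
      · refine Finset.sum_congr rfl fun i _ => ?_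
        ring
    have ih' := ih (fun i => g (i + 1)) (∑ i ∈ Finset.range L, g (i + 1) * p ^ i)
      (fun i => hlt _) (fun i hi => hz _ (by omega)) rfl
    have hdiv : k / p = ∑ i ∈ Finset.range L, g (i + 1) * p ^ i := by
      rw [hre, Nat.add_mul_div_left _ _ (by omega : 0 < p), Nat.div_eq_of_lt (hlt 0), zero_add]
    cases j with
    | zero =>
      have hm : k % p = g 0 := by
        rw [hre, Nat.add_mul_mod_self_left, Nat.mod_eq_of_lt (hlt 0)]
      rw [pow_zero, Nat.div_one, hm]
    | succ j =>
      have h2 : k / p ^ (j + 1) = (∑ i ∈ Finset.range L, g (i + 1) * p ^ i) / p ^ j := by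
        rw [pow_succ', ← Nat.div_div_eq_div_mul, hdiv]
      rw [h2]
      exact ih' j

lemma digit_sum_mod (k : ℕ) :
    ∀ L, ∑ j ∈ Finset.range L, (k / p ^ j % p) * p ^ j = k % p ^ L := by
  intro L
  induction L with
  | zero => simp [Nat.mod_one]
  | succ L ih =>
    rw [Finset.sum_range_succ, ih, Nat.mod_pow_succ]
    ring

lemma digit_sum_eq (k L : ℕ) (hL : k < p ^ L) :
    ∑ j ∈ Finset.range L, (k / p ^ j % p) * p ^ j = k := by
  rw [digit_sum_mod p k L, Nat.mod_eq_of_lt hL]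

lemma Ews_eq (f : ℕ →₀ ℕ) (L : ℕ) (hsupp : ∀ j, f j ≠ 0 → j < L + 2)
    (h0 : f 0 = 0) (h1 : f 1 = 0) :
    Ews p f = p ^ 2 * ∑ j ∈ Finset.range L, f (j + 2) * p ^ j := by
  rw [Ews, Finsupp.sum_of_support_subset f (s := Finset.range (L + 2))
    (fun j hj => Finset.mem_range.2 (hsupp j (Finsupp.mem_support_iff.1 hj)))
    (fun j a => a * p ^ j) (fun i _ => zero_mul _)]
  rw [Finset.sum_range_succ', Finset.sum_range_succ', h0, h1, zero_mul, zero_mul,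
    add_zero, add_zero, Finset.mul_sum]
  refine Finset.sum_congr rfl fun i _ => ?_
  ring

lemma lt_pow_self' (hp : 2 ≤ p) (k : ℕ) : k < p ^ (k + 1) := by
  calc k < 2 ^ k := Nat.lt_two_pow_self
  _ ≤ p ^ k := Nat.pow_le_pow_left hp k
  _ ≤ p ^ (k + 1) := Nat.pow_le_pow_right (by omega) (by omega)

lemma wt_e'_eq (hp : 2 ≤ p) (k : ℕ) (e' : ℕ →₀ ℕ) (h0 : e' 0 = 0) (h1 : e' 1 = 0)
    (hd : ∀ j, e' (j + 2) = k / p ^ j % p) : Ews p e' = p ^ 2 * k := by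
  have hL : k < p ^ (k + 1) := lt_pow_self' p hp k
  have hsupp : ∀ j, e' j ≠ 0 → j < (k + 1) + 2 := by
    intro j hj
    by_contra hcon
    push_neg at hcon
    have hj2 : j = (j - 2) + 2 := by omega
    rw [hj2, hd] at hj
    have : k < p ^ (j - 2) :=
      lt_of_lt_of_le hL (Nat.pow_le_pow_right (by omega) (by omega))
    rw [Nat.div_eq_of_lt this, Nat.zero_mod] at hj
    exact hj rfl
  rw [Ews_eq p e' (k + 1) hsupp h0 h1]
  congr 1
  refine Eq.trans ?_ (digit_sum_eq p k (k + 1) hL)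
  exact Finset.sum_congr rfl fun j _ => by rw [hd j]

lemma e_eq_digits (hp : 2 ≤ p) (k : ℕ) {f : ℕ →₀ ℕ} (h0 : f 0 = 0) (h1 : f 1 = 0)
    (hlt : ∀ j, f j < p) (hw : Ews p f = p ^ 2 * k) :
    ∀ j, f (j + 2) = k / p ^ j % p := by
  have hsupp : ∀ j, f j ≠ 0 → j < (f.support.sup id + 1) + 2 := by
    intro j hj
    have : j ≤ f.support.sup id := Finset.le_sup (f := id) (Finsupp.mem_support_iff.2 hj)
    omega
  rw [Ews_eq p f (f.support.sup id + 1) hsupp h0 h1] at hw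
  have hk : ∑ j ∈ Finset.range (f.support.sup id + 1), f (j + 2) * p ^ j = k :=
    Nat.eq_of_mul_eq_mul_left (by positivity) hw
  exact digit_unique p hp (f.support.sup id + 1) (fun j => f (j + 2)) k (fun j => hlt _)
    (fun j hj => by
      by_contra hc
      have : j + 2 ≤ f.support.sup id := Finset.le_sup (f := id) (Finsupp.mem_support_iff.2 hc)
      omega) hk

lemma no_act_t_empty {x : Mono 2} (hne : ¬ (act p r x).Nonempty) : x.t = ∅ :=
  Finset.eq_empty_of_forall_notMem fun m hm => hne ⟨m, Finset.mem_union_left _ hm⟩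

lemma special0 (hp : 0 < p) (k : ℕ) {x : Mono 2} (h1 : x.e 1 = 0)
    (hw : x.wt p = p ^ 2 * k) (hne : ¬ (act p 0 x).Nonempty) : x = zeta2pow k := by
  have ht0 : x.t = ∅ := no_act_t_empty p 0 hne
  have hhi : ∀ m, 3 ≤ m → x.e m = 0 := by
    intro m hm
    by_contra hc
    refine hne ⟨m, (mem_act p 0 hp (Nat.zero_le 1)).2 (Or.inr ⟨hm, ?_⟩)⟩
    simpa using Nat.one_le_iff_ne_zero.2 hc
  have he : x.e = Finsupp.single 2 (x.e 2) := by
    ext a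
    match a with
    | 0 => rw [x.he, Finsupp.single_apply, if_neg (by omega)]
    | 1 => rw [h1, Finsupp.single_apply, if_neg (by omega)]
    | 2 => rw [Finsupp.single_apply, if_pos rfl]
    | (a + 3) => rw [hhi (a + 3) (by omega), Finsupp.single_apply, if_neg (by omega)]
  have hwt : x.e 2 * p ^ 2 = p ^ 2 * k := by
    have h := hw
    rw [wt_eq, ht0, Finset.sum_empty, add_zero] at h
    rw [he, Ews_single] at h
    exact h
  have h2 : x.e 2 = k := by
    refine Nat.eq_of_mul_eq_mul_left (show 0 < p ^ 2 by positivity) ?_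
    rw [← hwt]; ring
  refine mono_ext ?_ ht0
  rw [he, h2]; rfl

lemma special1 (hp : 2 ≤ p) (k : ℕ) {x : Mono 2} (h1 : x.e 1 = 0)
    (hw : x.wt p = p ^ 2 * k) (hne : ¬ (act p 1 x).Nonempty) (e' : ℕ →₀ ℕ)
    (h0' : e' 0 = 0) (h1' : e' 1 = 0) (hd : ∀ j, e' (j + 2) = k / p ^ j % p) :
    x = ⟨e', ∅, h0', fun m hm => absurd hm (Finset.notMem_empty m)⟩ := by
  have ht0 : x.t = ∅ := no_act_t_empty p 1 hne
  have hlt : ∀ j, x.e j < p := by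
    intro j
    match j with
    | 0 => rw [x.he]; omega
    | 1 => rw [h1]; omega
    | (j + 2) =>
      by_contra hc
      push_neg at hc
      refine hne ⟨j + 3, (mem_act p 1 (by omega) (le_refl 1)).2 (Or.inr ⟨by omega, ?_⟩)⟩
      simpa [pow_one, show j + 3 - 1 = j + 2 from rfl] using hc
  have hwE : Ews p x.e = p ^ 2 * k := by
    have h := hw
    rw [wt_eq, ht0, Finset.sum_empty, add_zero] at h
    exact h
  have hdig := e_eq_digits p hp k x.he h1 hlt hwE
  refine mono_ext ?_ ht0
  show x.e = e'
  ext a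
  match a with
  | 0 => rw [x.he, h0']
  | 1 => rw [h1, h1']
  | (a + 2) => rw [hdig a, hd a]

lemma not_bdry (hp : p.Prime) (k : ℕ) (z : Mono 2)
    (hz : ∀ (x : Mono 2), ∀ m ∈ x.t, Qtarget p r x m ≠ z) :
    (Finsupp.single z (1 : ZMod p) : B p 2) ∉ Submodule.map (Qop p 2 r) (Wsub p k) := by
  classical
  rintro ⟨y, -, hQy⟩
  have hall : ∀ v : B p 2, (Qop p 2 r v) z = 0 := by
    intro v
    induction v using Finsupp.induction_linear with
    | zero => simp
    | add f g hf hg => rw [map_add, Finsupp.add_apply, hf, hg, add_zero]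
    | single a b =>
      rw [Qop_single, Finsupp.smul_apply]
      have hz0 : (Qmono p r a) z = 0 := by
        rw [Qmono, Finset.sum_apply']
        refine Finset.sum_eq_zero fun m hm => ?_
        rw [Finsupp.smul_apply, Finsupp.single_apply, if_neg (hz a m hm), smul_zero]
      rw [hz0, smul_zero]
  have h1 := hall y
  rw [hQy, Finsupp.single_apply, if_pos rfl] at h1
  haveI := Fact.mk hp
  exact one_ne_zero h1

lemma Qtarget_ne_zeta (k : ℕ) :
    ∀ (x : Mono 2), ∀ m ∈ x.t, Qtarget p 0 x m ≠ zeta2pow k := by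
  intro x m hm heq
  have hm3 : 3 ≤ m := x.ht m hm
  have he : (Qtarget p 0 x m).e = Finsupp.single 2 k := congrArg Mono.e heq
  rw [Qtarget_e p 0 (Nat.zero_le 1) hm3] at he
  have h2 := DFunLike.congr_fun he m
  have hne2 : ¬ ((2 : ℕ) = m) := by omega
  rw [Finsupp.add_apply, Finsupp.single_apply, Finsupp.single_apply, Nat.sub_zero,
    if_pos rfl, pow_zero, if_neg hne2] at h2
  omega

lemma Qtarget_ne_special1 (k : ℕ) (hp : 2 ≤ p) (e' : ℕ →₀ ℕ)
    (h0' : e' 0 = 0) (h1' : e' 1 = 0) (hd : ∀ j, e' (j + 2) = k / p ^ j % p) :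
    ∀ (x : Mono 2), ∀ m ∈ x.t, Qtarget p 1 x m ≠
      (⟨e', ∅, h0', fun m hm => absurd hm (Finset.notMem_empty m)⟩ : Mono 2) := by
  intro x m hm heq
  have hm3 : 3 ≤ m := x.ht m hm
  have he : (Qtarget p 1 x m).e = e' := congrArg Mono.e heq
  rw [Qtarget_e p 1 (le_refl 1) hm3] at he
  have h2 := DFunLike.congr_fun he (m - 1)
  rw [Finsupp.add_apply, Finsupp.single_apply, if_pos rfl, pow_one] at h2
  have hlt : e' (m - 1) < p := by
    have hm1 : m - 1 = (m - 3) + 2 := by omega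
    rw [hm1, hd]
    exact Nat.mod_lt _ (by omega)
  omega

lemma Qop_single_empty {z : Mono 2} (hz : z.t = ∅) :
    Qop p 2 r (Finsupp.single z (1 : ZMod p)) = 0 := by
  rw [Qop_single, Qmono, hz, Finset.sum_empty, smul_zero]

end MH

/-- `W₂(k)` is stable under `Q₀` and `Q₁`, and its `Q₀`- and
`Q₁`-Margolis homology groups are one-dimensional: `M(W₂(k); Q₀)` is spanned by the class
of `ζ₂^k`, and `M(W₂(k); Q₁)` is spanned by the class of `ζ₂^{a₀} ζ₃^{a₁} ζ₄^{a₂} ⋯`,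
where `k = a₀ + a₁ p + a₂ p² + ⋯` is the base-`p` expansion of `k`. -/
theorem margolis_homology_of_W2k (p : ℕ) (hp : p.Prime) (hodd : Odd p) (k : ℕ)
    (e' : ℕ →₀ ℕ) (h0 : e' 0 = 0) (h1 : e' 1 = 0)
    (hdigits : ∀ j, e' (j + 2) = (k / p ^ j) % p) :
    (∀ r ≤ 1, ∀ x ∈ Wsub p k, Qop p 2 r x ∈ Wsub p k) ∧
    (let z : B p 2 := Finsupp.single (zeta2pow k) 1;
      z ∈ Wsub p k ∧ Qop p 2 0 z = 0 ∧
      z ∉ Submodule.map (Qop p 2 0) (Wsub p k) ∧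
      Wsub p k ⊓ LinearMap.ker (Qop p 2 0) ≤
        Submodule.span (ZMod p) {z} ⊔ Submodule.map (Qop p 2 0) (Wsub p k)) ∧
    (let z' : B p 2 := Finsupp.single
        (⟨e', ∅, h0, fun m hm => absurd hm (Finset.notMem_empty m)⟩ : Mono 2) 1;
      z' ∈ Wsub p k ∧ Qop p 2 1 z' = 0 ∧
      z' ∉ Submodule.map (Qop p 2 1) (Wsub p k) ∧
      Wsub p k ⊓ LinearMap.ker (Qop p 2 1) ≤
        Submodule.span (ZMod p) {z'} ⊔ Submodule.map (Qop p 2 1) (Wsub p k)) := by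
  have hp2 : 2 ≤ p := hp.two_le
  have hp0 : 0 < p := by omega
  refine ⟨?_, ?_, ?_⟩
  · -- stability
    intro r hr x hx
    refine MH.mapW p k (Qop p 2 r) (Wsub p k) (fun y hy => ?_) hx
    rw [MH.Qop_single, one_smul]
    exact MH.Qmono_mem p r k hr hy
  · -- the Q₀ Margolis homology
    have hzW : (Finsupp.single (zeta2pow k) 1 : B p 2) ∈ Wsub p k := by
      refine MH.single_mem_Wsub p k ⟨?_, ?_⟩
      · show (Finsupp.single 2 k : ℕ →₀ ℕ) 1 = 0
        rw [Finsupp.single_apply, if_neg (by omega)]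
      · rw [MH.wt_eq]
        show MH.Ews p (Finsupp.single 2 k) + ∑ m ∈ (∅ : Finset ℕ), p ^ m = p ^ 2 * k
        rw [MH.Ews_single, Finset.sum_empty, add_zero]; ring
    refine ⟨hzW, MH.Qop_single_empty p 0 rfl, MH.not_bdry p 0 hp k _ (MH.Qtarget_ne_zeta p k), ?_⟩
    intro x hx
    obtain ⟨hxW, hxk⟩ := Submodule.mem_inf.1 hx
    have hker : Qop p 2 0 x = 0 := LinearMap.mem_ker.1 hxk
    have hkey := MH.key' p 0 hp0 (by omega) x
    rw [hker, map_zero, add_zero] at hkey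
    have hpi : MH.piop p 0 x ∈
        Submodule.span (ZMod p) {(Finsupp.single (zeta2pow k) 1 : B p 2)} := by
      refine MH.mapW p k (MH.piop p 0) _ (fun y hy => ?_) hxW
      rw [MH.piop_single, one_smul, MH.pimono]
      split_ifs with h
      · exact Submodule.zero_mem _
      · rw [MH.special0 p hp0 k hy.1 hy.2 h]
        exact Submodule.mem_span_singleton_self _
    have hhop : MH.hop p 0 x ∈ Wsub p k :=
      MH.mapW p k (MH.hop p 0) _ (fun y hy => by
        rw [MH.hop_single, one_smul]; exact MH.hmono_mem p 0 k hp0 (by omega) hy) hxW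
    refine Submodule.mem_sup.2 ⟨MH.piop p 0 x, hpi, Qop p 2 0 (MH.hop p 0 x),
      Submodule.mem_map_of_mem hhop, ?_⟩
    rw [hkey]; abel
  · -- the Q₁ Margolis homology
    have hlt' : ∀ j, e' j < p := by
      intro j
      match j with
      | 0 => rw [h0]; omega
      | 1 => rw [h1]; omega
      | (j + 2) => rw [hdigits]; exact Nat.mod_lt _ (by omega)
    set zm : Mono 2 := ⟨e', ∅, h0, fun m hm => absurd hm (Finset.notMem_empty m)⟩ with hzm
    have hzW : (Finsupp.single zm 1 : B p 2) ∈ Wsub p k := by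
      refine MH.single_mem_Wsub p k ⟨h1, ?_⟩
      rw [MH.wt_eq]
      show MH.Ews p e' + ∑ m ∈ (∅ : Finset ℕ), p ^ m = p ^ 2 * k
      rw [MH.wt_e'_eq p hp2 k e' h0 h1 hdigits, Finset.sum_empty, add_zero]
    refine ⟨hzW, MH.Qop_single_empty p 1 rfl, MH.not_bdry p 1 hp k _
      (MH.Qtarget_ne_special1 p k hp2 e' h0 h1 hdigits), ?_⟩
    intro x hx
    obtain ⟨hxW, hxk⟩ := Submodule.mem_inf.1 hx
    have hker : Qop p 2 1 x = 0 := LinearMap.mem_ker.1 hxk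
    have hkey := MH.key' p 1 hp0 (le_refl 1) x
    rw [hker, map_zero, add_zero] at hkey
    have hpi : MH.piop p 1 x ∈
        Submodule.span (ZMod p) {(Finsupp.single zm 1 : B p 2)} := by
      refine MH.mapW p k (MH.piop p 1) _ (fun y hy => ?_) hxW
      rw [MH.piop_single, one_smul, MH.pimono]
      split_ifs with h
      · exact Submodule.zero_mem _
      · rw [MH.special1 p hp2 k hy.1 hy.2 h e' h0 h1 hdigits]
        exact Submodule.mem_span_singleton_self _
    have hhop : MH.hop p 1 x ∈ Wsub p k :=
      MH.mapW p k (MH.hop p 1) _ (fun y hy => by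
        rw [MH.hop_single, one_smul]; exact MH.hmono_mem p 1 k hp0 (le_refl 1) hy) hxW
    refine Submodule.mem_sup.2 ⟨MH.piop p 1 x, hpi, Qop p 2 1 (MH.hop p 1 x),
      Submodule.mem_map_of_mem hhop, ?_⟩
    rw [hkey]; abel
end

section
/- Fix j ≥ 1 and 0 ≤ i ≤ p − 1, and let ψ : ℓ_{pj+i} → B₁/F^{pj}B₁ be the composite of the inclusion ℓ_{pj+i} ⊆ B₁ with the quotient map. Then the kernel of ψ equals the span of the monomials of B₁ not involving τ̄_2 whose weight w satisfies p²j ≤ w ≤ p²j + pi; that is, ker ψ = ⊕_{k=0}^{i} M_2(pj + k), where M_2(pj+k) is the span of the τ̄_2-free monomials of weight exactly p(pj+k). In particular no monomial of ker ψ involves τ̄_2. -/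
/-- The weight of the `τ̄₂`-free part of a monomial of `B₁`: writing a monomial uniquely
as `m τ̄₂^ε` with `m` not involving `τ̄₂`, this is `wt m`. -/
def Mono.wtF (p : ℕ) {n : ℕ} (x : Mono n) : ℕ :=
  x.e.sum (fun k a => a * p ^ k) + ∑ m ∈ x.t.erase 2, p ^ m

/-- The filtration `F^a B₁`: the span of the monomials `m τ̄₂^ε` with `wt m ≥ pa`. -/
noncomputable def FSub (p a : ℕ) : Submodule (ZMod p) (B p 1) := monSpan p 1 (fun x => p * a ≤ x.wtF p)

/-- The Brown–Gitler comodule `ℓ_c ⊆ B₁`: the span of the monomials of weight `≤ pc`. -/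
noncomputable def lSub (p c : ℕ) : Submodule (ZMod p) (B p 1) := monSpan p 1 (fun x => x.wt p ≤ p * c)

/-- `M₂(a)` viewed inside `B₁`: the span of the `τ̄₂`-free monomials of weight
exactly `pa`. -/
noncomputable def M2sub (p a : ℕ) : Submodule (ZMod p) (B p 1) :=
  monSpan p 1 (fun x => 2 ∉ x.t ∧ x.wt p = p * a)

/-- The composite `ψ : ℓ_{pj+i} ⊆ B₁ ↠ B₁/F^{pj}B₁` of the inclusion and the
projection. -/
noncomputable def psiMap (p j i : ℕ) :
    lSub p (p * j + i) →ₗ[ZMod p] (B p 1 ⧸ FSub p (p * j)) :=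
  (FSub p (p * j)).mkQ ∘ₗ (lSub p (p * j + i)).subtype

lemma monSpan_eq_supported (p n : ℕ) (P : Mono n → Prop) :
    monSpan p n P = Finsupp.supported (ZMod p) (ZMod p) {x | P x} :=
  (Finsupp.supported_eq_span_single _ _).symm

lemma mem_monSpan {p n : ℕ} {P : Mono n → Prop} {f : B p n} :
    f ∈ monSpan p n P ↔ ∀ x ∈ f.support, P x := by
  rw [monSpan_eq_supported, Finsupp.mem_supported]
  simp [Set.subset_def]

lemma wt_dvd (p : ℕ) (x : Mono 1) : p ∣ x.wt p := by
  unfold Mono.wt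
  apply dvd_add
  · apply Finset.dvd_sum
    intro k hk
    have hk0 : k ≠ 0 := by
      intro h; subst h; exact (Finsupp.mem_support_iff.mp hk) x.he
    exact (dvd_pow_self p hk0).mul_left _
  · apply Finset.dvd_sum
    intro m hm
    have h2 := x.ht m hm
    exact dvd_pow_self p (by omega)

lemma wt_eq_wtF (p : ℕ) (x : Mono 1) :
    x.wt p = x.wtF p + (if 2 ∈ x.t then p ^ 2 else 0) := by
  unfold Mono.wt Mono.wtF
  split_ifs with h
  · rw [← Finset.sum_erase_add x.t _ h]
    ring
  · rw [Finset.erase_eq_of_notMem h, add_zero]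

/-- For `j ≥ 1` and `0 ≤ i ≤ p − 1`, the kernel of
`ψ : ℓ_{pj+i} → B₁/F^{pj}B₁` is the span of the `τ̄₂`-free monomials whose weight `w`
satisfies `p²j ≤ w ≤ p²j + pi`; that is, `ker ψ = ⊕_{k=0}^{i} M₂(pj + k)`.  In
particular no monomial of `ker ψ` involves `τ̄₂`. -/
theorem kernel_of_psi (p : ℕ) (hp : p.Prime) (hodd : Odd p)
    (j : ℕ) (hj : 1 ≤ j) (i : ℕ) (hi : i ≤ p - 1) :
    LinearMap.ker (psiMap p j i) =
      Submodule.comap (lSub p (p * j + i)).subtype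
        (monSpan p 1 (fun x =>
          2 ∉ x.t ∧ p ^ 2 * j ≤ x.wt p ∧ x.wt p ≤ p ^ 2 * j + p * i)) ∧
    monSpan p 1 (fun x => 2 ∉ x.t ∧ p ^ 2 * j ≤ x.wt p ∧ x.wt p ≤ p ^ 2 * j + p * i) =
      ⨆ k ∈ Set.Iic i, M2sub p (p * j + k) := by
  have hp2 : 2 ≤ p := hp.two_le
  constructor
  · have hker : LinearMap.ker (psiMap p j i) =
        Submodule.comap (lSub p (p * j + i)).subtype (FSub p (p * j)) := by
      unfold psiMap
      rw [LinearMap.ker_comp, Submodule.ker_mkQ]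
    rw [hker]
    ext f
    simp only [Submodule.mem_comap, Submodule.coe_subtype]
    rw [show FSub p (p * j) = monSpan p 1 (fun x => p * (p * j) ≤ x.wtF p) from rfl,
      mem_monSpan, mem_monSpan]
    have hf : ∀ x ∈ (f : B p 1).support, x.wt p ≤ p * (p * j + i) := by
      have h2 : (f : B p 1) ∈ monSpan p 1 (fun x => x.wt p ≤ p * (p * j + i)) := f.2
      exact mem_monSpan.mp h2
    constructor
    · intro h x hx
      have h1 := h x hx
      have h2 := hf x hx
      have hw := wt_eq_wtF p x
      by_cases h2t : 2 ∈ x.t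
      · exfalso
        rw [if_pos h2t] at hw
        have hpi : p * i ≤ p * (p - 1) := Nat.mul_le_mul_left _ hi
        nlinarith [Nat.sub_add_cancel (le_of_lt (lt_of_lt_of_le one_lt_two hp2))]
      · rw [if_neg h2t, add_zero] at hw
        refine ⟨h2t, ?_, ?_⟩
        · rw [hw]; nlinarith
        · nlinarith
    · intro h x hx
      obtain ⟨h2t, hlo, _⟩ := h x hx
      have hw := wt_eq_wtF p x
      rw [if_neg h2t, add_zero] at hw
      rw [← hw]; nlinarith
  · have hset : {x : Mono 1 | 2 ∉ x.t ∧ p ^ 2 * j ≤ x.wt p ∧ x.wt p ≤ p ^ 2 * j + p * i}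
        = ⋃ k ∈ Set.Iic i, {x : Mono 1 | 2 ∉ x.t ∧ x.wt p = p * (p * j + k)} := by
      ext x
      simp only [Set.mem_setOf_eq, Set.mem_iUnion, Set.mem_Iic, exists_prop]
      constructor
      · rintro ⟨h2, hlo, hhi⟩
        obtain ⟨w, hw⟩ := wt_dvd p x
        have hwlo : p * j ≤ w := by
          apply Nat.le_of_mul_le_mul_left _ (by omega : 0 < p)
          nlinarith
        have hwhi : w ≤ p * j + i := by
          apply Nat.le_of_mul_le_mul_left _ (by omega : 0 < p)
          nlinarith
        refine ⟨w - p * j, by omega, h2, ?_⟩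
        rw [hw, Nat.add_sub_cancel' hwlo]
      · rintro ⟨k, hk, h2, hw⟩
        exact ⟨h2, by nlinarith, by nlinarith⟩
    show monSpan p 1 _ = _
    unfold monSpan M2sub monSpan
    rw [show {x : Mono 1 | 2 ∉ x.t ∧ p ^ 2 * j ≤ x.wt p ∧ x.wt p ≤ p ^ 2 * j + p * i}
        = ⋃ k ∈ Set.Iic i, {x : Mono 1 | 2 ∉ x.t ∧ x.wt p = p * (p * j + k)} from hset,
      Set.image_iUnion₂]
    exact Submodule.span_iUnion₂ _
end

section
/- Fix j ≥ 1 and take i = p − 1. Then ψ : ℓ_{pj+p−1} → B₁/F^{pj}B₁ is surjective, yielding a short exact sequence of E(2)-modules 0 → ⊕_{k=0}^{p−1} M_2(pj + k) → ℓ_{pj+p−1} → B₁/F^{pj}B₁ → 0, where the first map is the inclusion of the span of the τ̄_2-free monomials of weight w with p²j ≤ w ≤ p²j + p(p−1). -/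
section Aux

lemma Qop_mem_monSpan {p n r : ℕ} {P : Mono n → Prop} {f : B p n}
    (h : ∀ x ∈ f.support, ∀ m ∈ x.t, P (Qtarget p r x m)) :
    Qop p n r f ∈ monSpan p n P := by
  rw [Qop, Finsupp.lsum_apply, Finsupp.sum]
  refine Submodule.sum_mem _ fun x hx => ?_
  rw [LinearMap.toSpanSingleton_apply]
  refine Submodule.smul_mem _ _ ?_
  unfold Qmono
  refine Submodule.sum_mem _ fun m hm => Submodule.smul_mem _ _ ?_
  exact Submodule.subset_span ⟨_, h x hx m hm, rfl⟩

lemma wt_Qtarget_le {p r n : ℕ} {x : Mono n} {m : ℕ} (hm : m ∈ x.t) :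
    (Qtarget p r x m).wt p ≤ x.wt p := by
  have ht : ∑ i ∈ x.t.erase m, p ^ i + p ^ m = ∑ i ∈ x.t, p ^ i :=
    Finset.sum_erase_add _ _ hm
  unfold Mono.wt Qtarget
  simp only
  by_cases h : r < m
  · rw [if_pos h, Finsupp.sum_add_index' (fun i => by simp)
      (fun i b₁ b₂ => add_mul b₁ b₂ _), Finsupp.sum_single_index (by simp)]
    have hpw : p ^ r * p ^ (m - r) = p ^ m := by
      rw [← pow_add, Nat.add_sub_cancel' h.le]
    rw [hpw]
    omega
  · rw [if_neg h]
    omega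

lemma wtF_le_wtF_Qtarget {p r : ℕ} (hr : r ≤ 2) (x : Mono 1) {m : ℕ} (hm : m ∈ x.t) :
    x.wtF p ≤ (Qtarget p r x m).wtF p := by
  have hm2 : 2 ≤ m := x.ht m hm
  unfold Mono.wtF Qtarget
  simp only
  by_cases h2 : m = 2
  · subst h2
    rw [Finset.erase_idem]
    by_cases h : r < 2
    · rw [if_pos h, Finsupp.sum_add_index' (fun i => by simp)
        (fun i b₁ b₂ => add_mul b₁ b₂ _)]
      omega
    · rw [if_neg h]
  · have h3 : 3 ≤ m := by omega
    have h : r < m := by omega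
    rw [if_pos h, Finsupp.sum_add_index' (fun i => by simp)
      (fun i b₁ b₂ => add_mul b₁ b₂ _), Finsupp.sum_single_index (by simp)]
    have hmm : m ∈ x.t.erase 2 := Finset.mem_erase.mpr ⟨by omega, hm⟩
    have ht : ∑ i ∈ (x.t.erase 2).erase m, p ^ i + p ^ m = ∑ i ∈ x.t.erase 2, p ^ i :=
      Finset.sum_erase_add _ _ hmm
    have hpw : p ^ r * p ^ (m - r) = p ^ m := by
      rw [← pow_add, Nat.add_sub_cancel' h.le]
    rw [Finset.erase_right_comm, hpw]
    omega

lemma wt_eq_wtF_add {p : ℕ} (x : Mono 1) :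
    x.wt p = x.wtF p + (if 2 ∈ x.t then p ^ 2 else 0) := by
  unfold Mono.wt Mono.wtF
  by_cases h : 2 ∈ x.t
  · rw [if_pos h]
    have h2 : ∑ i ∈ x.t.erase 2, p ^ i + p ^ 2 = ∑ i ∈ x.t, p ^ i :=
      Finset.sum_erase_add x.t (fun i => p ^ i) h
    omega
  · rw [if_neg h, Finset.erase_eq_of_notMem h, add_zero]

lemma p_dvd_wtF {p : ℕ} (x : Mono 1) : p ∣ x.wtF p := by
  unfold Mono.wtF
  refine Nat.dvd_add ?_ ?_
  · rw [Finsupp.sum]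
    refine Finset.dvd_sum fun k hk => ?_
    rcases Nat.eq_zero_or_pos k with h0 | h0
    · exact absurd (by subst h0; exact x.he) (Finsupp.mem_support_iff.mp hk)
    · exact ((dvd_pow_self p h0.ne').mul_left _)
  · refine Finset.dvd_sum fun m hm => ?_
    have := x.ht m (Finset.mem_of_mem_erase hm)
    exact dvd_pow_self p (by omega)

end Aux

/-- For `j ≥ 1` and `i = p − 1`, the map `ψ : ℓ_{pj+p−1} → B₁/F^{pj}B₁`
is a surjection of `E(2)`-modules (`ℓ_{pj+p−1}` and `F^{pj}B₁` are stable under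
`Q₀, Q₁, Q₂`), yielding a short exact sequence of `E(2)`-modules
`0 → ⊕_{k=0}^{p−1} M₂(pj + k) → ℓ_{pj+p−1} → B₁/F^{pj}B₁ → 0`,
the first map being the inclusion of the span of the `τ̄₂`-free monomials of weight `w`
with `p²j ≤ w ≤ p²j + p(p−1)`. -/
theorem psi_short_exact_sequence (p : ℕ) (hp : p.Prime) (hodd : Odd p)
    (j : ℕ) (hj : 1 ≤ j) :
    (∀ r ≤ 2, ∀ x ∈ lSub p (p * j + (p - 1)), Qop p 1 r x ∈ lSub p (p * j + (p - 1))) ∧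
    (∀ r ≤ 2, ∀ x ∈ FSub p (p * j), Qop p 1 r x ∈ FSub p (p * j)) ∧
    Function.Surjective (psiMap p j (p - 1)) ∧
    LinearMap.ker (psiMap p j (p - 1)) =
      Submodule.comap (lSub p (p * j + (p - 1))).subtype
        (monSpan p 1 (fun x =>
          2 ∉ x.t ∧ p ^ 2 * j ≤ x.wt p ∧ x.wt p ≤ p ^ 2 * j + p * (p - 1))) := by
  have hp2 : 2 ≤ p := hp.two_le
  have hpp : p * (p - 1) + p = p * p := by
    obtain ⟨q, rfl⟩ : ∃ q, p = q + 1 := ⟨p - 1, by omega⟩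
    simp only [Nat.add_sub_cancel]
    ring
  have e1 : p * (p * j + (p - 1)) = p * (p * j) + p * (p - 1) := mul_add _ _ _
  have e2 : p * (p * j) = p ^ 2 * j := by ring
  have e3 : p ^ 2 = p * p := sq p
  refine ⟨?_, ?_, ?_, ?_⟩
  · intro r _ f hf
    exact Qop_mem_monSpan fun x hx m hm =>
      le_trans (wt_Qtarget_le hm) (mem_monSpan.mp hf x hx)
  · intro r hr f hf
    exact Qop_mem_monSpan fun x hx m hm =>
      le_trans (mem_monSpan.mp hf x hx) (wtF_le_wtF_Qtarget hr x hm)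
  · -- surjectivity
    have hsup : lSub p (p * j + (p - 1)) ⊔ FSub p (p * j) = ⊤ := by
      rw [Submodule.eq_top_iff']
      intro f
      rw [← Finsupp.sum_single f, Finsupp.sum]
      refine Submodule.sum_mem _ fun x hx => ?_
      have hx1 : Finsupp.single x (f x) = f x • Finsupp.single x (1 : ZMod p) := by
        rw [Finsupp.smul_single', mul_one]
      rw [hx1]
      refine Submodule.smul_mem _ _ ?_
      by_cases h : p * (p * j) ≤ x.wtF p
      · exact Submodule.mem_sup_right (Submodule.subset_span ⟨x, h, rfl⟩)
      · refine Submodule.mem_sup_left (Submodule.subset_span ⟨x, ?_, rfl⟩)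
        push_neg at h
        obtain ⟨a, ha⟩ := p_dvd_wtF (p := p) x
        have haj : a < p * j := by
          have := h; rw [ha] at this
          exact Nat.lt_of_mul_lt_mul_left this
        have hle : x.wtF p + p ≤ p * (p * j) := by
          have h4 : p * (a + 1) ≤ p * (p * j) := Nat.mul_le_mul le_rfl haj
          rw [Nat.mul_add, mul_one] at h4
          rw [ha]
          exact h4
        have h1 := wt_eq_wtF_add (p := p) x
        have h2 : (if 2 ∈ x.t then p ^ 2 else 0) ≤ p ^ 2 := by
          split <;> simp
        show x.wt p ≤ p * (p * j + (p - 1))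
        rw [e1]
        linarith
    intro y
    obtain ⟨b, rfl⟩ := Submodule.mkQ_surjective _ y
    have hb : b ∈ lSub p (p * j + (p - 1)) ⊔ FSub p (p * j) := hsup ▸ Submodule.mem_top
    obtain ⟨u, hu, v, hv, rfl⟩ := Submodule.mem_sup.mp hb
    refine ⟨⟨u, hu⟩, ?_⟩
    show (FSub p (p * j)).mkQ u = (FSub p (p * j)).mkQ (u + v)
    rw [map_add, show (FSub p (p * j)).mkQ v = 0 from
      (Submodule.Quotient.mk_eq_zero _).mpr hv, add_zero]
  · -- kernel
    have hker : LinearMap.ker (psiMap p j (p - 1)) =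
        Submodule.comap (lSub p (p * j + (p - 1))).subtype (FSub p (p * j)) := by
      rw [psiMap, LinearMap.ker_comp, Submodule.ker_mkQ]
    rw [hker]
    ext ⟨f, hf⟩
    simp only [Submodule.mem_comap, Submodule.subtype_apply]
    have hfs := mem_monSpan.mp hf
    rw [show (FSub p (p * j) : Submodule (ZMod p) (B p 1)) =
      monSpan p 1 (fun x => p * (p * j) ≤ x.wtF p) from rfl]
    rw [mem_monSpan, mem_monSpan]
    constructor
    · intro h x hx
      have hw := hfs x hx
      have hF := h x hx
      have h1 := wt_eq_wtF_add (p := p) x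
      by_cases h2 : 2 ∈ x.t
      · exfalso
        rw [if_pos h2] at h1
        rw [e1] at hw
        linarith
      · rw [if_neg h2, add_zero] at h1
        rw [e1] at hw
        exact ⟨h2, by linarith, by linarith⟩
    · intro h x hx
      obtain ⟨h2, hlo, -⟩ := h x hx
      have h1 := wt_eq_wtF_add (p := p) x
      rw [if_neg h2, add_zero] at h1
      linarith
end
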